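/- arXiv:1402.5890 — 7 statements merged into one kernel-verified Lean document; each statement's English description precedes it below -/
import Mathlib

section
/- For n ≥ 2, the n×n real symmetric tridiagonal matrix A(n) with diagonal entries a_{ii} = n−1, off-diagonal entries a_{i,i+1} = a_{i+1,i} = (1/2)√(i(2n−i−1)) for i = 1,…,n−2, and a_{n−1,n} = a_{n,n−1} = √(n(n−1)/2), has eigenvalues exactly {0, 2, 4, …, 2n−2}. -/
/-- The 1-indexed off-diagonal entries of the matrix `A(n)`. -/
noncomputable def offA (n k : ℕ) : ℝ :=
  if k = n - 1 then Real.sqrt (n * (n - 1) / 2)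
  else (1 / 2) * Real.sqrt (k * (2 * n - k - 1))

/-- The matrix `A(n)`: symmetric tridiagonal, diagonal `n-1`,
super/sub-diagonal `offA n k` at (1-indexed) position `(k, k+1)`. -/
noncomputable def Amat (n : ℕ) : Matrix (Fin n) (Fin n) ℝ :=
  Matrix.of fun i j =>
    if (i : ℕ) = (j : ℕ) then (n : ℝ) - 1
    else if (i : ℕ) + 1 = (j : ℕ) then offA n ((i : ℕ) + 1)
    else if (j : ℕ) + 1 = (i : ℕ) then offA n ((j : ℕ) + 1)
    else 0

open Polynomial

noncomputable def gP (s k : ℕ) : ℝ[X] := (1 - X) ^ (2 * s) * (1 + X) ^ (2 * k)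

noncomputable def cK (s k j : ℕ) : ℝ := (gP s k).coeff j

lemma cK_zero (s k : ℕ) : cK s k 0 = 1 := by
  simp [cK, gP, coeff_zero_eq_eval_zero]

lemma pow_pred_mul (p : ℝ[X]) (a : ℕ) : (a : ℝ[X]) * (p ^ (a - 1) * p) = a * p ^ a := by
  cases a with
  | zero => simp
  | succ t => rw [Nat.succ_sub_one, ← pow_succ]

lemma deriv_identity (a b : ℕ) :
    (1 - X) * (1 + X) * derivative ((1 - X) ^ a * (1 + X) ^ b) =
      (C ((b : ℝ) - a) - C ((a + b : ℝ)) * X) * ((1 - X) ^ a * (1 + X) ^ b) := by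
  rw [derivative_mul, derivative_pow, derivative_pow]
  have h1 : derivative (1 - X : ℝ[X]) = -1 := by simp
  have h2 : derivative (1 + X : ℝ[X]) = 1 := by simp
  rw [h1, h2]
  simp only [C_eq_natCast]
  have e1 := pow_pred_mul (1 - X : ℝ[X]) a
  have e2 := pow_pred_mul (1 + X : ℝ[X]) b
  have key : (1 - X) * (1 + X) *
      ((a : ℝ[X]) * (1 - X) ^ (a - 1) * -1 * (1 + X) ^ b +
        (1 - X) ^ a * ((b : ℝ[X]) * (1 + X) ^ (b - 1) * 1)) =
      (1 + X) * (1 + X) ^ b * -(((a : ℝ[X])) * ((1 - X) ^ (a - 1) * (1 - X))) +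
        (1 - X) * (1 - X) ^ a * ((b : ℝ[X]) * ((1 + X) ^ (b - 1) * (1 + X))) := by ring
  rw [key, e1, e2]
  simp only [map_sub, map_add, C_eq_natCast]
  ring

lemma coeff_identity (s k : ℕ) (j : ℕ) :
    (derivative (gP s k)).coeff j - (X ^ 2 * derivative (gP s k)).coeff j =
      ((2 * k : ℝ) - 2 * s) * cK s k j - ((2 * s + 2 * k : ℝ)) * (X * gP s k).coeff j := by
  have h := deriv_identity (2 * s) (2 * k)
  have h2 : derivative (gP s k) - X ^ 2 * derivative (gP s k) =
      C ((2 * k : ℝ) - 2 * s) * gP s k - C ((2 * s + 2 * k : ℝ)) * (X * gP s k) := by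
    have e1 : ((2 * s : ℕ) : ℝ) = 2 * (s : ℝ) := by push_cast; ring
    have e2 : ((2 * k : ℕ) : ℝ) = 2 * (k : ℝ) := by push_cast; ring
    rw [e1, e2] at h
    rw [gP]
    linear_combination h
  have h3 := congrArg (fun p => p.coeff j) h2
  simp only [coeff_sub, coeff_C_mul] at h3
  simpa only [cK] using h3

lemma cK_one (s k : ℕ) : cK s k 1 = ((2 * k : ℝ) - 2 * s) * cK s k 0 := by
  have h := coeff_identity s k 0
  rw [coeff_derivative, coeff_X_pow_mul'] at h
  simp only [mul_coeff_zero, coeff_X_zero, zero_mul, mul_zero] at h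
  norm_num at h
  simpa [cK] using h

lemma cK_rec (s k : ℕ) (i : ℕ) :
    ((i : ℝ) + 2) * cK s k (i + 2) + ((2 * s + 2 * k : ℝ) - i) * cK s k i =
      ((2 * k : ℝ) - 2 * s) * cK s k (i + 1) := by
  cases i with
  | zero =>
    have h := coeff_identity s k 1
    rw [coeff_derivative, coeff_X_pow_mul'] at h
    norm_num [coeff_X_mul, cK] at h ⊢
    linarith [h]
  | succ t =>
    have h := coeff_identity s k (t + 2)
    rw [coeff_derivative, coeff_X_pow_mul'] at h
    have ht : 2 ≤ t + 2 := by omega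
    rw [if_pos ht] at h
    have hsub : t + 2 - 2 = t := by omega
    rw [hsub, coeff_derivative] at h
    have hX : (X * gP s k).coeff (t + 2) = cK s k (t + 1) := coeff_X_mul _ _
    rw [hX] at h
    simp only [cK] at h ⊢
    push_cast at h ⊢
    linarith [h]

lemma reflect_pow_my (p : ℝ[X]) (F : ℕ) (hp : p.natDegree ≤ F) (t : ℕ) :
    reflect (t * F) (p ^ t) = (reflect F p) ^ t := by
  induction t with
  | zero => simp [reflect_C]
  | succ t ih =>
    have hdeg : (p ^ t).natDegree ≤ t * F :=
      natDegree_pow_le.trans (Nat.mul_le_mul_left t hp)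
    rw [show (t + 1) * F = t * F + F from by ring]
    rw [pow_succ, pow_succ, ← ih, ← reflect_mul _ _ hdeg hp]

lemma reflect_one_sub_X : reflect 1 ((1 : ℝ[X]) - X) = X - 1 := by
  rw [reflect_sub]
  have h1 : reflect 1 (1 : ℝ[X]) = X := by
    rw [show (1 : ℝ[X]) = C 1 from (map_one C).symm, reflect_C]
    simp
  have h2 : reflect 1 (X : ℝ[X]) = 1 := by
    simpa using reflect_monomial 1 1 (R := ℝ)
  rw [h1, h2]

lemma reflect_one_add_X : reflect 1 ((1 : ℝ[X]) + X) = X + 1 := by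
  rw [reflect_add]
  have h1 : reflect 1 (1 : ℝ[X]) = X := by
    rw [show (1 : ℝ[X]) = C 1 from (map_one C).symm, reflect_C]
    simp
  have h2 : reflect 1 (X : ℝ[X]) = 1 := by
    simpa using reflect_monomial 1 1 (R := ℝ)
  rw [h1, h2]

lemma reflect_gP (s k : ℕ) : reflect (2 * s + 2 * k) (gP s k) = gP s k := by
  have hd1 : ((1 : ℝ[X]) - X).natDegree ≤ 1 := (natDegree_sub_le _ _).trans (by simp)
  have hd2 : ((1 : ℝ[X]) + X).natDegree ≤ 1 := (natDegree_add_le _ _).trans (by simp)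
  have hdm : (((1 : ℝ[X]) - X) ^ (2 * s)).natDegree ≤ 2 * s := by
    simpa using natDegree_pow_le_of_le (2 * s) hd1
  have hdm2 : (((1 : ℝ[X]) + X) ^ (2 * k)).natDegree ≤ 2 * k := by
    simpa using natDegree_pow_le_of_le (2 * k) hd2
  have r1 := reflect_pow_my _ 1 hd1 (2 * s)
  have r2 := reflect_pow_my _ 1 hd2 (2 * k)
  rw [mul_one] at r1 r2
  rw [gP, reflect_mul _ _ hdm hdm2, r1, r2, reflect_one_sub_X, reflect_one_add_X]
  have e1 : ((X : ℝ[X]) - 1) ^ (2 * s) = (1 - X) ^ (2 * s) := by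
    rw [show ((X : ℝ[X]) - 1) = -(1 - X) by ring, neg_pow, Even.neg_one_pow ⟨s, by ring⟩, one_mul]
  have e2 : ((X : ℝ[X]) + 1) ^ (2 * k) = (1 + X) ^ (2 * k) := by rw [add_comm]
  rw [e1, e2]

lemma cK_symm (s k : ℕ) {j : ℕ} (hj : j ≤ 2 * s + 2 * k) :
    cK s k (2 * s + 2 * k - j) = cK s k j := by
  have h := congrArg (fun p => p.coeff j) (reflect_gP s k)
  simp only [coeff_reflect] at h
  rw [revAt_le hj] at h
  simpa [cK] using h



section SQRT

lemma sqrt_nat_mul (a b : ℕ) :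
    Real.sqrt (a : ℝ) * Real.sqrt (b : ℝ) = Real.sqrt ((a * b : ℕ) : ℝ) := by
  rw [Nat.cast_mul, Real.sqrt_mul (Nat.cast_nonneg a)]

lemma sqrt_nat_sq_mul (a b : ℕ) :
    Real.sqrt ((a ^ 2 * b : ℕ) : ℝ) = (a : ℝ) * Real.sqrt (b : ℝ) := by
  push_cast
  rw [Real.sqrt_mul (by positivity), Real.sqrt_sq (Nat.cast_nonneg a)]

lemma sqrt_nat_sq (a : ℕ) : Real.sqrt ((a ^ 2 : ℕ) : ℝ) = (a : ℝ) := by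
  push_cast
  exact Real.sqrt_sq (Nat.cast_nonneg a)

end SQRT

noncomputable def wF (n j : ℕ) : ℝ :=
  Real.sqrt ((2 * j.factorial * (2 * n - 2 - j).factorial : ℕ) : ℝ)

lemma wF_pos (n j : ℕ) : 0 < wF n j := by
  rw [wF]
  apply Real.sqrt_pos.mpr
  have : 0 < 2 * j.factorial * (2 * n - 2 - j).factorial :=
    Nat.mul_pos (Nat.mul_pos (by norm_num) j.factorial_pos) (2 * n - 2 - j).factorial_pos
  exact_mod_cast this

lemma offA_generic {n j : ℕ} (hn : 2 ≤ n) (hj1 : 1 ≤ j) (hj2 : j ≤ n - 2) :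
    offA n j = (1 / 2) * Real.sqrt ((j * (2 * n - 1 - j) : ℕ) : ℝ) := by
  rw [offA, if_neg (by omega)]
  congr 2
  push_cast [Nat.cast_sub (show j ≤ 2 * n - 1 by omega),
    Nat.cast_sub (show 1 ≤ 2 * n by omega)]
  ring

lemma offA_last {n : ℕ} (hn : 2 ≤ n) :
    offA n (n - 1) = (1 / 2) * Real.sqrt ((2 * n * (n - 1) : ℕ) : ℝ) := by
  rw [offA, if_pos rfl]
  have h4 : Real.sqrt (4 : ℝ) = 2 := by
    rw [show (4 : ℝ) = 2 ^ 2 by norm_num, Real.sqrt_sq (by norm_num)]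
  have e : ((n : ℝ) * ((n : ℝ) - 1) / 2) = ((2 * n * (n - 1) : ℕ) : ℝ) / 4 := by
    push_cast [Nat.cast_sub (show 1 ≤ n by omega)]
    ring
  rw [e, Real.sqrt_div (Nat.cast_nonneg _), h4]
  ring

lemma termR {n i : ℕ} (hn : 2 ≤ n) (h2 : i + 1 ≤ n - 2) :
    offA n (i + 1) * wF n (i + 1) = (((i : ℝ) + 1) / 2) * wF n i := by
  rw [offA_generic hn (by omega) h2, wF, wF, mul_assoc, sqrt_nat_mul]
  have e : ((i + 1) * (2 * n - 1 - (i + 1))) * (2 * (i + 1).factorial * (2 * n - 2 - (i + 1)).factorial)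
      = (i + 1) ^ 2 * (2 * i.factorial * (2 * n - 2 - i).factorial) := by
    obtain ⟨d, hd⟩ : ∃ d, 2 * n - 2 - i = d + 1 := ⟨2 * n - 2 - i - 1, by omega⟩
    have h3 : 2 * n - 2 - (i + 1) = d := by omega
    have h4 : 2 * n - 1 - (i + 1) = d + 1 := by omega
    rw [hd, h3, h4, Nat.factorial_succ, Nat.factorial_succ]
    ring
  rw [e, sqrt_nat_sq_mul]
  push_cast
  ring

lemma termRlast {n : ℕ} (hn : 2 ≤ n) :
    offA n (n - 1) * (((n - 1).factorial : ℕ) : ℝ) = (((n : ℝ) - 1) / 2) * wF n (n - 2) := by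
  obtain ⟨a, rfl⟩ : ∃ a, n = a + 2 := ⟨n - 2, by omega⟩
  have h1 : a + 2 - 1 = a + 1 := by omega
  have h2 : a + 2 - 2 = a := by omega
  have hoff := offA_last (show 2 ≤ a + 2 by omega)
  rw [h1] at hoff
  rw [h1, h2, hoff, wF]
  have hcast : (((a + 1).factorial : ℕ) : ℝ) = Real.sqrt ((((a + 1).factorial ^ 2 : ℕ)) : ℝ) :=
    (sqrt_nat_sq _).symm
  rw [hcast, mul_assoc, sqrt_nat_mul]
  have e : (2 * (a + 2) * (a + 1)) * ((a + 1).factorial ^ 2)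
      = (a + 1) ^ 2 * (2 * a.factorial * (2 * (a + 2) - 2 - a).factorial) := by
    have h3 : 2 * (a + 2) - 2 - a = a + 2 := by omega
    rw [h3, Nat.factorial_succ (a + 1), Nat.factorial_succ a]
    ring
  rw [e, sqrt_nat_sq_mul]
  push_cast
  ring

lemma termL {n j : ℕ} (hn : 2 ≤ n) (h1 : 1 ≤ j) (h2 : j ≤ n - 2) :
    offA n j * wF n (j - 1) = (((2 * n - 1 - j : ℕ) : ℝ) / 2) * wF n j := by
  obtain ⟨t, rfl⟩ : ∃ t, j = t + 1 := ⟨j - 1, by omega⟩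
  have h3 : t + 1 - 1 = t := by omega
  rw [h3, offA_generic hn (by omega) h2, wF, wF, mul_assoc, sqrt_nat_mul]
  obtain ⟨b, hb⟩ : ∃ b, 2 * n - 2 - (t + 1) = b := ⟨_, rfl⟩
  have h4 : 2 * n - 1 - (t + 1) = b + 1 := by omega
  have h5 : 2 * n - 2 - t = b + 1 := by omega
  have e : ((t + 1) * (2 * n - 1 - (t + 1))) * (2 * t.factorial * (2 * n - 2 - t).factorial)
      = (b + 1) ^ 2 * (2 * (t + 1).factorial * (2 * n - 2 - (t + 1)).factorial) := by
    rw [h4, h5, hb, Nat.factorial_succ b, Nat.factorial_succ t]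
    ring
  rw [e, sqrt_nat_sq_mul, h4]
  push_cast
  ring

lemma termLlast {n : ℕ} (hn : 2 ≤ n) :
    offA n (n - 1) * wF n (n - 2) = ((n.factorial : ℕ) : ℝ) := by
  obtain ⟨a, rfl⟩ : ∃ a, n = a + 2 := ⟨n - 2, by omega⟩
  have h1 : a + 2 - 1 = a + 1 := by omega
  have h2 : a + 2 - 2 = a := by omega
  have hoff := offA_last (show 2 ≤ a + 2 by omega)
  rw [h1] at hoff
  rw [h1, h2, hoff, wF, mul_assoc, sqrt_nat_mul]
  have e : (2 * (a + 2) * (a + 1)) * (2 * a.factorial * (2 * (a + 2) - 2 - a).factorial)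
      = (2 * (a + 2).factorial) ^ 2 := by
    have h3 : 2 * (a + 2) - 2 - a = a + 2 := by omega
    rw [h3, Nat.factorial_succ (a + 1), Nat.factorial_succ a]
    ring
  rw [e, sqrt_nat_sq]
  push_cast
  ring

lemma mulVec_Amat (n : ℕ) (v : Fin n → ℝ) (i : Fin n) :
    (Amat n).mulVec v i =
      (if _ : 0 < (i : ℕ) then
          offA n i * v ⟨(i : ℕ) - 1, lt_of_le_of_lt (Nat.sub_le _ _) i.isLt⟩ else 0) +
        ((n : ℝ) - 1) * v i +
        (if h : (i : ℕ) + 1 < n then offA n ((i : ℕ) + 1) * v ⟨(i : ℕ) + 1, h⟩ else 0) := by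
  classical
  have expand : ∀ j : Fin n, Amat n i j * v j =
      (if (j : ℕ) + 1 = (i : ℕ) then offA n ((j : ℕ) + 1) * v j else 0) +
        (if (i : ℕ) = (j : ℕ) then ((n : ℝ) - 1) * v j else 0) +
        (if (i : ℕ) + 1 = (j : ℕ) then offA n ((i : ℕ) + 1) * v j else 0) := by
    intro j
    simp only [Amat, Matrix.of_apply]
    split_ifs <;> (first | (exfalso; omega) | ring1)
  have hsum : (Amat n).mulVec v i = ∑ j, Amat n i j * v j := by
    simp [Matrix.mulVec, dotProduct]
  rw [hsum, Finset.sum_congr rfl (fun j _ => expand j), Finset.sum_add_distrib,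
    Finset.sum_add_distrib]
  congr 1
  · congr 1
    · -- sub-diagonal sum
      by_cases h : 0 < (i : ℕ)
      · rw [dif_pos h]
        rw [Finset.sum_eq_single (⟨(i : ℕ) - 1, lt_of_le_of_lt (Nat.sub_le _ _) i.isLt⟩ : Fin n)]
        · rw [if_pos (show ((i : ℕ) - 1) + 1 = (i : ℕ) from by omega),
            show ((i : ℕ) - 1) + 1 = (i : ℕ) from by omega]
        · intro b _ hb
          exact if_neg (fun hcon => hb (Fin.ext (show (b : ℕ) = (i : ℕ) - 1 from by omega)))
        · intro hmem
          exact absurd (Finset.mem_univ _) hmem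
      · rw [dif_neg h]
        apply Finset.sum_eq_zero
        intro j _
        exact if_neg (by omega)
    · -- diagonal sum
      have hcond : ∀ j : Fin n, (if (i : ℕ) = (j : ℕ) then ((n : ℝ) - 1) * v j else 0)
          = (if i = j then ((n : ℝ) - 1) * v j else 0) := by
        intro j
        congr 1
        simp [Fin.ext_iff]
      rw [Finset.sum_congr rfl (fun j _ => hcond j),
        Finset.sum_ite_eq Finset.univ i (fun j => ((n : ℝ) - 1) * v j)]
      simp
  · -- super-diagonal sum
    by_cases h : (i : ℕ) + 1 < n
    · rw [dif_pos h]
      rw [Finset.sum_eq_single (⟨(i : ℕ) + 1, h⟩ : Fin n)]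
      · exact if_pos rfl
      · intro b _ hb
        exact if_neg (fun hcon => hb (Fin.ext (show (b : ℕ) = (i : ℕ) + 1 from by omega)))
      · intro hmem
        exact absurd (Finset.mem_univ _) hmem
    · rw [dif_neg h]
      apply Finset.sum_eq_zero
      intro j _
      exact if_neg (by omega)


noncomputable def vVec (n k : ℕ) : Fin n → ℝ := fun i =>
  if (i : ℕ) = n - 1 then cK (n - 1 - k) k (n - 1) * (((n - 1).factorial : ℕ) : ℝ)
  else cK (n - 1 - k) k i * wF n i

lemma exists_eigenvector (n k : ℕ) (hn : 2 ≤ n) (hk : k < n) :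
    ∃ v : Fin n → ℝ, v ≠ 0 ∧ (Amat n).mulVec v = (2 * (k : ℝ)) • v := by
  classical
  refine ⟨vVec n k, ?_, ?_⟩
  · -- nonzero
    intro hv
    have h0 : vVec n k ⟨0, by omega⟩ = 0 := congrFun hv _
    rw [vVec] at h0
    rw [if_neg (show ¬((0 : ℕ) = n - 1) from by omega)] at h0
    rw [cK_zero] at h0
    have := wF_pos n 0
    rw [one_mul] at h0
    exact absurd h0 (ne_of_gt this)
  · -- eigen equation
    have hsk : (n - 1 - k) + k = n - 1 := by omega
    have hskR : ((n - 1 - k : ℕ) : ℝ) = (n : ℝ) - 1 - (k : ℝ) := by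
      push_cast [Nat.cast_sub (show k ≤ n - 1 by omega), Nat.cast_sub (show 1 ≤ n by omega)]
      ring
    funext i
    rw [Pi.smul_apply, smul_eq_mul, mulVec_Amat]
    by_cases hlast : (i : ℕ) = n - 1
    · -- last row
      rw [dif_pos (show 0 < (i : ℕ) by omega), dif_neg (show ¬((i : ℕ) + 1 < n) by omega)]
      have hvi : vVec n k i = cK (n - 1 - k) k (n - 1) * (((n - 1).factorial : ℕ) : ℝ) := by
        rw [vVec, if_pos hlast]
      have hprev : vVec n k ⟨(i : ℕ) - 1, lt_of_le_of_lt (Nat.sub_le _ _) i.isLt⟩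
          = cK (n - 1 - k) k (n - 2) * wF n (n - 2) := by
        rw [vVec]
        have hidx : ((⟨(i : ℕ) - 1, lt_of_le_of_lt (Nat.sub_le _ _) i.isLt⟩ : Fin n) : ℕ)
            = n - 2 := by
          show (i : ℕ) - 1 = n - 2
          omega
        rw [hidx, if_neg (show ¬(n - 2 = n - 1) from by omega)]
      rw [hvi, hprev, hlast, add_zero]
      have hOW : offA n (n - 1) * wF n (n - 2) = ((n.factorial : ℕ) : ℝ) := termLlast hn
      have hrec := cK_rec (n - 1 - k) k (n - 2)
      rw [show n - 2 + 2 = n from by omega, show n - 2 + 1 = n - 1 from by omega] at hrec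
      have hsym := cK_symm (n - 1 - k) k (j := n - 2)
        (show n - 2 ≤ 2 * (n - 1 - k) + 2 * k by omega)
      rw [show 2 * (n - 1 - k) + 2 * k - (n - 2) = n from by omega] at hsym
      rw [hsym] at hrec
      rw [hskR] at hrec
      have hcast2 : ((n - 2 : ℕ) : ℝ) = (n : ℝ) - 2 := by
        push_cast [Nat.cast_sub (show 2 ≤ n by omega)]; ring
      rw [hcast2] at hrec
      have hfac : ((n.factorial : ℕ) : ℝ) = (n : ℝ) * (((n - 1).factorial : ℕ) : ℝ) := by
        rw [← Nat.mul_factorial_pred (show n ≠ 0 by omega)]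
        push_cast
        ring
      rw [hfac] at hOW
      have hO : offA n (n - 1) * (cK (n - 1 - k) k (n - 2) * wF n (n - 2))
          = ((n : ℝ) * (((n - 1).factorial : ℕ) : ℝ)) * cK (n - 1 - k) k (n - 2) := by
        rw [← hOW]; ring
      rw [hO]
      linear_combination ((((n - 1).factorial : ℕ) : ℝ) / 2) * hrec
    · -- not last row: i ≤ n - 2
      have hi2 : (i : ℕ) ≤ n - 2 := by have := i.isLt; omega
      have hir : (i : ℕ) + 1 < n := by omega
      rw [dif_pos hir]
      have hvi : vVec n k i = cK (n - 1 - k) k i * wF n i := by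
        rw [vVec, if_neg hlast]
      have hnext : vVec n k ⟨(i : ℕ) + 1, hir⟩
          = if (i : ℕ) + 1 = n - 1 then cK (n - 1 - k) k (n - 1) * (((n - 1).factorial : ℕ) : ℝ)
            else cK (n - 1 - k) k ((i : ℕ) + 1) * wF n ((i : ℕ) + 1) := by
        rw [vVec]
      have hR : offA n ((i : ℕ) + 1) * vVec n k ⟨(i : ℕ) + 1, hir⟩
          = (((i : ℕ) : ℝ) + 1) / 2 * (cK (n - 1 - k) k ((i : ℕ) + 1) * wF n i) := by
        rw [hnext]
        by_cases hc : (i : ℕ) + 1 = n - 1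
        · rw [if_pos hc]
          have hieq : (i : ℕ) = n - 2 := by omega
          have htr := termRlast hn
          have hcast2 : ((n - 2 : ℕ) : ℝ) = (n : ℝ) - 2 := by
            push_cast [Nat.cast_sub (show 2 ≤ n by omega)]; ring
          rw [hc, hieq, hcast2]
          linear_combination (cK (n - 1 - k) k (n - 1)) * htr
        · rw [if_neg hc]
          have h2 : (i : ℕ) + 1 ≤ n - 2 := by omega
          rw [← mul_assoc, mul_comm (offA n ((i : ℕ) + 1)), mul_assoc, termR hn h2]
          ring
      rw [hR, hvi]
      by_cases h0 : (i : ℕ) = 0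
      · -- first row
        rw [dif_neg (by omega)]
        rw [h0]
        have hone := cK_one (n - 1 - k) k
        rw [hskR] at hone
        norm_num
        linear_combination (wF n 0 / 2) * hone
      · -- generic row
        rw [dif_pos (show 0 < (i : ℕ) by omega)]
        have hprev : vVec n k ⟨(i : ℕ) - 1, lt_of_le_of_lt (Nat.sub_le _ _) i.isLt⟩
            = cK (n - 1 - k) k ((i : ℕ) - 1) * wF n ((i : ℕ) - 1) := by
          rw [vVec]
          have hidx : ((⟨(i : ℕ) - 1, lt_of_le_of_lt (Nat.sub_le _ _) i.isLt⟩ : Fin n) : ℕ)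
              = (i : ℕ) - 1 := rfl
          rw [hidx, if_neg (show ¬((i : ℕ) - 1 = n - 1) from by omega)]
        rw [hprev]
        have hL : offA n (i : ℕ) * (cK (n - 1 - k) k ((i : ℕ) - 1) * wF n ((i : ℕ) - 1))
            = (((2 * n - 1 - (i : ℕ) : ℕ) : ℝ) / 2) * cK (n - 1 - k) k ((i : ℕ) - 1) * wF n (i : ℕ) := by
          rw [← mul_assoc, mul_comm (offA n (i : ℕ)), mul_assoc, termL hn (by omega) hi2]
          ring
        rw [hL]
        obtain ⟨t, ht⟩ : ∃ t, (i : ℕ) = t + 1 := ⟨(i : ℕ) - 1, by omega⟩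
        rw [ht]
        have hrec := cK_rec (n - 1 - k) k t
        rw [hskR] at hrec
        have hc1 : ((2 * n - 1 - (t + 1) : ℕ) : ℝ) = 2 * (n : ℝ) - 2 - (t : ℝ) := by
          push_cast [Nat.cast_sub (show t + 1 ≤ 2 * n - 1 by omega),
            Nat.cast_sub (show 1 ≤ 2 * n by omega)]
          ring
        rw [hc1, show t + 1 - 1 = t from by omega]
        push_cast
        linear_combination (wF n (t + 1) / 2) * hrec

theorem stmt_1 (n : ℕ) (hn : 2 ≤ n) :
    spectrum ℝ (Amat n) = {x : ℝ | ∃ k < n, x = 2 * (k : ℝ)} := by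
  classical
  have hf : ∀ v : Fin n → ℝ, Matrix.toLinAlgEquiv' (Amat n) v = (Amat n).mulVec v :=
    fun v => rfl
  ext x
  simp only [Set.mem_setOf_eq]
  rw [← AlgEquiv.spectrum_eq (Matrix.toLinAlgEquiv' : Matrix (Fin n) (Fin n) ℝ ≃ₐ[ℝ] _) (Amat n),
    ← Module.End.hasEigenvalue_iff_mem_spectrum]
  constructor
  · intro hx
    by_contra hcon
    push_neg at hcon
    obtain ⟨v0, hv0⟩ := hx.exists_hasEigenvector
    have hvec : ∀ j : Fin n, ∃ v : Fin n → ℝ, v ≠ 0 ∧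
        (Amat n).mulVec v = (2 * ((j : ℕ) : ℝ)) • v :=
      fun j => exists_eigenvector n j hn j.isLt
    choose vs hvs0 hvsE using hvec
    set f := (Matrix.toLinAlgEquiv' (Amat n) : Module.End ℝ (Fin n → ℝ)) with hfdef
    have hμinj : Function.Injective
        (fun o : Option (Fin n) => Option.elim o x (fun j => 2 * ((j : ℕ) : ℝ))) := by
      rintro (_ | a) (_ | b) hab <;> simp only [Option.elim] at hab
      · rfl
      · exact absurd hab (hcon b b.isLt)
      · exact absurd hab.symm (hcon a a.isLt)
      · have : ((a : ℕ) : ℝ) = ((b : ℕ) : ℝ) := by linarith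
        have hab2 : (a : ℕ) = (b : ℕ) := Nat.cast_injective this
        exact congrArg some (Fin.ext hab2)
    have hEV : ∀ o : Option (Fin n), Module.End.HasEigenvector f
        (Option.elim o x (fun j => 2 * ((j : ℕ) : ℝ))) (Option.elim o v0 vs) := by
      rintro (_ | j)
      · exact hv0
      · refine ⟨Module.End.mem_eigenspace_iff.mpr ?_, hvs0 j⟩
        rw [hfdef]
        show Matrix.toLinAlgEquiv' (Amat n) (vs j) = _
        rw [hf]
        exact hvsE j
    have hli := Module.End.eigenvectors_linearIndependent' f
      (fun o : Option (Fin n) => Option.elim o x (fun j => 2 * ((j : ℕ) : ℝ))) hμinj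
      (fun o => Option.elim o v0 vs) hEV
    have hcard := hli.fintype_card_le_finrank
    rw [Module.finrank_fintype_fun_eq_card] at hcard
    simp [Fintype.card_option] at hcard
  · rintro ⟨k, hkn, rfl⟩
    obtain ⟨v, hvne, hveq⟩ := exists_eigenvector n k hn hkn
    refine Module.End.hasEigenvalue_of_hasEigenvector
      ⟨Module.End.mem_eigenspace_iff.mpr ?_, hvne⟩
    show Matrix.toLinAlgEquiv' (Amat n) v = _
    rw [hf]
    exact hveq
end

section
/- For n ≥ 2, the leading principal (n−1)×(n−1) submatrix A°(n) of A(n), obtained by deleting the last row and column, has eigenvalues exactly {1, 3, 5, …, 2n−3}. -/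
/-- The leading principal submatrix of `A(n)` of order `n-1`. -/
noncomputable def AmatSub (n : ℕ) : Matrix (Fin (n - 1)) (Fin (n - 1)) ℝ :=
  (Amat n).submatrix (Fin.castLE (Nat.sub_le n 1)) (Fin.castLE (Nat.sub_le n 1))


open Polynomial


noncomputable def pP (b c : ℕ) : ℝ[X] := (1 - X)^b * (1 + X)^c

lemma keyPoly (b c : ℕ) (hb : 1 ≤ b) (hc : 1 ≤ c) :
    (1 - X^2) * derivative (pP b c) + C ((b:ℝ) + c) * ((1 + X) * pP b c)
      = C (2*(c:ℝ)) * pP b c := by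
  obtain ⟨b', rfl⟩ : ∃ b', b = b' + 1 := ⟨b - 1, by omega⟩
  obtain ⟨c', rfl⟩ : ∃ c', c = c' + 1 := ⟨c - 1, by omega⟩
  simp only [pP, derivative_mul, derivative_pow, derivative_sub, derivative_add,
    derivative_one, derivative_X, Nat.add_sub_cancel]
  simp only [pow_succ, map_add, map_one, map_natCast, map_mul, map_ofNat]
  push_cast
  ring

noncomputable def vc (b c k : ℕ) : ℝ := (pP b c).coeff k

lemma coeff_rec0 (b c : ℕ) (hb : 1 ≤ b) (hc : 1 ≤ c) :
    vc b c 1 + ((b:ℝ) + c) * vc b c 0 = 2*(c:ℝ) * vc b c 0 := by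
  have h := congrArg (fun q => q.coeff 0) (keyPoly b c hb hc)
  simpa [vc, sub_mul, add_mul, coeff_derivative, mul_comm] using h

lemma coeff_rec (b c : ℕ) (hb : 1 ≤ b) (hc : 1 ≤ c) (j : ℕ) :
    ((j:ℝ)+2) * vc b c (j+2) + ((b:ℝ)+c) * (vc b c (j+1) + vc b c j)
      = (j:ℝ) * vc b c j + (2*(c:ℝ)) * vc b c (j+1) := by
  have h := congrArg (fun q => q.coeff (j+1)) (keyPoly b c hb hc)
  have hX : X^2 * derivative (pP b c) = derivative (pP b c) * X^2 := by ring
  simp only [sub_mul, add_mul, one_mul, hX, coeff_add, coeff_sub, coeff_C_mul,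
    coeff_derivative, coeff_X_mul, coeff_mul_X_pow'] at h
  rcases j with _ | j
  · simp only [show ¬ (2 ≤ 0+1) by omega, if_false] at h
    push_cast [vc] at h ⊢
    linarith
  · simp only [show (2 ≤ j+1+1) by omega, if_true, show j+1+1-2 = j by omega] at h
    push_cast [vc] at h ⊢
    linarith

lemma vc_zero (b c : ℕ) : vc b c 0 = 1 := by
  simp [vc, pP, coeff_zero_eq_eval_zero]

lemma natDegree_one_sub_X : (1 - X : ℝ[X]).natDegree ≤ 1 := by
  compute_degree

lemma natDegree_one_add_X : (1 + X : ℝ[X]).natDegree ≤ 1 := by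
  compute_degree

lemma natDegree_one_sub_X_pow (b : ℕ) : ((1 - X : ℝ[X])^b).natDegree ≤ b :=
  le_trans natDegree_pow_le (by
    calc b * (1 - X : ℝ[X]).natDegree ≤ b * 1 := Nat.mul_le_mul_left _ natDegree_one_sub_X
    _ = b := by omega)

lemma natDegree_one_add_X_pow (c : ℕ) : ((1 + X : ℝ[X])^c).natDegree ≤ c :=
  le_trans natDegree_pow_le (by
    calc c * (1 + X : ℝ[X]).natDegree ≤ c * 1 := Nat.mul_le_mul_left _ natDegree_one_add_X
    _ = c := by omega)

lemma reflect_one_sub_X_pow (b : ℕ) : reflect b ((1 - X : ℝ[X])^b) = (X - 1)^b := by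
  induction b with
  | zero => simp
  | succ b ih =>
    rw [pow_succ, reflect_mul _ _ (natDegree_one_sub_X_pow b) natDegree_one_sub_X, ih,
      reflect_sub, reflect_one, reflect_one_X, pow_one, ← pow_succ]

lemma reflect_one_add_X_pow (c : ℕ) : reflect c ((1 + X : ℝ[X])^c) = (X + 1)^c := by
  induction c with
  | zero => simp
  | succ c ih =>
    rw [pow_succ, reflect_mul _ _ (natDegree_one_add_X_pow c) natDegree_one_add_X, ih,
      reflect_add, reflect_one, reflect_one_X, pow_one, ← pow_succ]

lemma vc_middle (b c m : ℕ) (hodd : Odd b) (hm : b + c = 2 * m) : vc b c m = 0 := by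
  have hrefl : reflect (b + c) (pP b c) = (-1)^b * pP b c := by
    rw [pP, reflect_mul _ _ (natDegree_one_sub_X_pow b) (natDegree_one_add_X_pow c),
      reflect_one_sub_X_pow, reflect_one_add_X_pow,
      show (X - 1 : ℝ[X])^b = (-1)^b * (1-X)^b by rw [← neg_sub (1:ℝ[X]) X, neg_pow],
      show (X + 1 : ℝ[X])^c = (1+X)^c by ring, mul_assoc]
  have h := congrArg (fun q => q.coeff m) hrefl
  simp only [coeff_reflect] at h
  rw [revAt_le (by omega : m ≤ b + c), show b + c - m = m by omega] at h
  have hneg : ((-1 : ℝ[X])^b * pP b c).coeff m = - vc b c m := by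
    rw [hodd.neg_one_pow]
    simp [vc]
  rw [hneg] at h
  have h2 : vc b c m = - vc b c m := h
  linarith

lemma choose_id1 (M k : ℕ) : (k+1) * (M - k) * M.choose k = (k+1)^2 * M.choose (k+1) := by
  have h := Nat.choose_succ_right_eq M k
  calc (k+1) * (M - k) * M.choose k = (k+1) * (M.choose k * (M - k)) := by ring
  _ = (k+1) * (M.choose (k+1) * (k+1)) := by rw [h]
  _ = (k+1)^2 * M.choose (k+1) := by ring

lemma choose_id2 (M k : ℕ) : (k+1) * (M - k) * M.choose (k+1) = (M - k)^2 * M.choose k := by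
  have h := Nat.choose_succ_right_eq M k
  calc (k+1) * (M - k) * M.choose (k+1) = (M - k) * (M.choose (k+1) * (k+1)) := by ring
  _ = (M - k) * (M.choose k * (M - k)) := by rw [h]
  _ = (M - k)^2 * M.choose k := by ring

lemma sq1 (M k : ℕ) (h : k ≤ M) :
    Real.sqrt (((k:ℝ)+1) * ((M:ℝ) - k)) * Real.sqrt (M.choose k)
      = ((k:ℝ)+1) * Real.sqrt (M.choose (k+1)) := by
  have hc : ((k:ℝ)+1) * ((M:ℝ) - k) = (((k+1) * (M - k) : ℕ) : ℝ) := by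
    push_cast [Nat.cast_sub h]; ring
  rw [hc, ← Real.sqrt_mul (by positivity),
    show ((k:ℝ)+1) = Real.sqrt (((k:ℝ)+1)^2) by rw [Real.sqrt_sq (by positivity)],
    ← Real.sqrt_mul (by positivity)]
  congr 1
  push_cast [← Nat.cast_mul]
  rw [show ((k+1) * (M-k) * M.choose k : ℕ) = ((k+1)^2 * M.choose (k+1) : ℕ) from choose_id1 M k]
  push_cast; ring

lemma sq2 (M k : ℕ) (h : k ≤ M) :
    Real.sqrt (((k:ℝ)+1) * ((M:ℝ) - k)) * Real.sqrt (M.choose (k+1))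
      = ((M:ℝ) - k) * Real.sqrt (M.choose k) := by
  have hc : ((k:ℝ)+1) * ((M:ℝ) - k) = (((k+1) * (M - k) : ℕ) : ℝ) := by
    push_cast [Nat.cast_sub h]; ring
  have hMk : ((M:ℝ) - k) = ((M - k : ℕ) : ℝ) := by push_cast [Nat.cast_sub h]; ring
  rw [hc, hMk, ← Real.sqrt_mul (by positivity),
    show ((M - k : ℕ) : ℝ) = Real.sqrt (((M - k : ℕ):ℝ)^2) by rw [Real.sqrt_sq (by positivity)],
    ← Real.sqrt_mul (by positivity)]
  congr 1
  push_cast [← Nat.cast_mul]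
  rw [show ((k+1) * (M-k) * M.choose (k+1) : ℕ) = ((M-k)^2 * M.choose k : ℕ) from choose_id2 M k]
  push_cast; ring

noncomputable def uu (n k j : ℕ) : ℝ :=
  vc (2*n-3-2*k) (2*k+1) j / Real.sqrt ((2*n-2).choose j)

noncomputable def gg (n j : ℕ) : ℝ := (1 / 2) * Real.sqrt (j * (2 * n - j - 1))

lemma uu_zero (n k : ℕ) : uu n k 0 = 1 := by
  simp [uu, vc_zero]

lemma uu_mid (n k : ℕ) (hn : 2 ≤ n) (hk : k ≤ n - 2) : uu n k (n-1) = 0 := by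
  have : vc (2*n-3-2*k) (2*k+1) (n-1) = 0 := by
    apply vc_middle
    · exact ⟨n - 2 - k, by omega⟩
    · omega
  simp [uu, this]

lemma row0 (n k : ℕ) (hn : 2 ≤ n) (hk : k ≤ n-2) :
    ((n:ℝ)-1) * uu n k 0 + gg n 1 * uu n k 1 = (2*(k:ℝ)+1) * uu n k 0 := by
  have hrec := coeff_rec0 (2*n-3-2*k) (2*k+1) (by omega) (by omega)
  have hC1 : (2*n-2).choose 1 = 2*n-2 := Nat.choose_one_right _
  have hpos : (0:ℝ) < Real.sqrt ((2*n-2).choose 1) := by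
    apply Real.sqrt_pos.mpr
    have : 0 < (2*n-2).choose 1 := by rw [hC1]; omega
    exact_mod_cast this
  have hgg : gg n 1 * uu n k 1 = vc (2*n-3-2*k) (2*k+1) 1 / 2 := by
    rw [gg, uu]
    have harg : (((1:ℕ)):ℝ) * (2 * (n:ℝ) - (((1:ℕ)):ℝ) - 1) = (((2*n-2).choose 1 : ℕ) : ℝ) := by
      rw [hC1]
      push_cast [Nat.cast_sub (show 2 ≤ 2*n by omega)]
      ring
    rw [harg, ← mul_div_assoc, div_eq_div_iff hpos.ne' two_ne_zero]
    ring
  rw [hgg]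
  have huu0 : uu n k 0 = vc (2*n-3-2*k) (2*k+1) 0 := by
    simp [uu]
  rw [huu0]
  have c1 : ((2*n-3-2*k : ℕ):ℝ) = 2*(n:ℝ) - 3 - 2*(k:ℝ) := by
    have h3 : (3:ℕ) ≤ 2*n := by omega
    have h4 : 2*k ≤ 2*n - 3 := by omega
    push_cast [Nat.cast_sub h4, Nat.cast_sub h3]
    ring
  rw [c1] at hrec
  push_cast at hrec
  linarith

lemma rowS (n k j : ℕ) (hn : 2 ≤ n) (hk : k ≤ n-2) (hj : j + 1 ≤ n - 2) :
    ((n:ℝ)-1) * uu n k (j+1) + gg n (j+2) * uu n k (j+2) + gg n (j+1) * uu n k j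
      = (2*(k:ℝ)+1) * uu n k (j+1) := by
  set a := 2*n-3-2*k with ha
  set lam := 2*k+1 with hlam
  have h2n : (2:ℕ) ≤ 2*n := by omega
  have hcast : ((2*n-2 : ℕ):ℝ) = 2*(n:ℝ) - 2 := by
    push_cast [Nat.cast_sub h2n]; ring
  have cpos : ∀ i : ℕ, i ≤ 2*n-2 → (0:ℝ) < Real.sqrt ((2*n-2).choose i) := by
    intro i hi
    apply Real.sqrt_pos.mpr
    exact_mod_cast Nat.choose_pos hi
  have hc0 := cpos j (by omega)
  have hc1 := cpos (j+1) (by omega)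
  have hc2 := cpos (j+2) (by omega)
  -- Term A
  have key1 := sq1 (2*n-2) (j+1) (by omega)
  have hA : gg n (j+2) * uu n k (j+2)
      = (((j:ℝ)+2)/2) * (vc a lam (j+2) / Real.sqrt ((2*n-2).choose (j+1))) := by
    rw [gg, uu]
    have harg : ((j+2:ℕ):ℝ) * (2*(n:ℝ) - ((j+2:ℕ):ℝ) - 1)
        = (((j+1:ℕ):ℝ)+1) * (((2*n-2:ℕ):ℝ) - ((j+1:ℕ):ℝ)) := by
      push_cast [Nat.cast_sub h2n]; ring
    rw [harg, ← mul_div_assoc, ← mul_div_assoc, div_eq_div_iff hc2.ne' hc1.ne']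
    push_cast [Nat.cast_sub h2n] at key1 ⊢
    linear_combination (vc a lam (j+2) / 2) * key1
  -- Term B
  have key2 := sq2 (2*n-2) j (by omega)
  have hB : gg n (j+1) * uu n k j
      = ((2*(n:ℝ)-2-(j:ℝ))/2) * (vc a lam j / Real.sqrt ((2*n-2).choose (j+1))) := by
    rw [gg, uu]
    have harg : ((j+1:ℕ):ℝ) * (2*(n:ℝ) - ((j+1:ℕ):ℝ) - 1)
        = (((j:ℕ):ℝ)+1) * (((2*n-2:ℕ):ℝ) - ((j:ℕ):ℝ)) := by
      push_cast [Nat.cast_sub h2n]; ring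
    rw [harg, ← mul_div_assoc, ← mul_div_assoc, div_eq_div_iff hc0.ne' hc1.ne']
    push_cast [Nat.cast_sub h2n] at key2 ⊢
    linear_combination (vc a lam j / 2) * key2
  -- numerator identity
  have hrec := coeff_rec a lam (by omega) (by omega) j
  have ca : ((a : ℕ):ℝ) = 2*(n:ℝ) - 3 - 2*(k:ℝ) := by
    rw [ha]
    have h3 : (3:ℕ) ≤ 2*n := by omega
    have h4 : 2*k ≤ 2*n - 3 := by omega
    push_cast [Nat.cast_sub h4, Nat.cast_sub h3]; ring
  rw [ca] at hrec
  push_cast [hlam] at hrec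
  have hnum : ((n:ℝ)-1) * vc a lam (j+1) + (((j:ℝ)+2)/2) * vc a lam (j+2)
      + ((2*(n:ℝ)-2-(j:ℝ))/2) * vc a lam j = (2*(k:ℝ)+1) * vc a lam (j+1) := by
    linarith
  rw [hA, hB]
  simp only [uu, ← ha, ← hlam]
  simp only [← mul_div_assoc]
  rw [← add_div, ← add_div, div_eq_div_iff hc1.ne' hc1.ne']
  linear_combination Real.sqrt ((2*n-2).choose (j+1)) * hnum

lemma charpoly_eval {m : ℕ} (M : Matrix (Fin m) (Fin m) ℝ) (x : ℝ) :
    M.charpoly.eval x = (Matrix.scalar (Fin m) x - M).det := by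
  rw [Matrix.charpoly, eval_det, Matrix.matPolyEquiv_charmatrix]
  simp

lemma mem_spec {m : ℕ} (M : Matrix (Fin m) (Fin m) ℝ) (x : ℝ) :
    x ∈ spectrum ℝ M ↔ M.charpoly.eval x = 0 := by
  rw [spectrum.mem_iff, Matrix.isUnit_iff_isUnit_det, isUnit_iff_ne_zero, not_not, charpoly_eval]
  rfl

lemma offA_gg (n j : ℕ) (hj : j ≠ n - 1) : offA n j = gg n j := by
  rw [offA, gg, if_neg hj]

lemma eigen_sum (n k : ℕ) (hn : 2 ≤ n) (hk : k < n - 1) (i : Fin (n-1)) :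
    (AmatSub n).mulVec (fun j => uu n k (j:ℕ)) i = (2*(k:ℝ)+1) * uu n k (i:ℕ) := by
  have hk2 : k ≤ n - 2 := by omega
  have hi : (i:ℕ) < n - 1 := i.isLt
  rw [Matrix.mulVec, dotProduct]
  have step1 : ∀ j : Fin (n-1), AmatSub n i j * uu n k (j:ℕ)
      = (fun jj : ℕ => (if (i:ℕ) = jj then (n:ℝ)-1
          else if (i:ℕ)+1 = jj then offA n ((i:ℕ)+1)
          else if jj+1 = (i:ℕ) then offA n (jj+1) else 0) * uu n k jj) (j:ℕ) := by
    intro j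
    simp [AmatSub, Amat, Matrix.submatrix_apply, Matrix.of_apply, Fin.coe_castLE]
  rw [Finset.sum_congr rfl (fun j _ => step1 j),
    Fin.sum_univ_eq_sum_range (fun jj : ℕ => (if (i:ℕ) = jj then (n:ℝ)-1
          else if (i:ℕ)+1 = jj then offA n ((i:ℕ)+1)
          else if jj+1 = (i:ℕ) then offA n (jj+1) else 0) * uu n k jj) (n-1)]
  have step2 : ∀ jj ∈ Finset.range (n-1),
      (if (i:ℕ) = jj then (n:ℝ)-1
          else if (i:ℕ)+1 = jj then offA n ((i:ℕ)+1)
          else if jj+1 = (i:ℕ) then offA n (jj+1) else 0) * uu n k jj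
      = (if jj = (i:ℕ) then ((n:ℝ)-1) * uu n k (i:ℕ) else 0)
        + (if jj = (i:ℕ)+1 then offA n ((i:ℕ)+1) * uu n k ((i:ℕ)+1) else 0)
        + (if 1 ≤ (i:ℕ) then (if jj = (i:ℕ)-1 then offA n (i:ℕ) * uu n k ((i:ℕ)-1) else 0) else 0) := by
    intro jj _
    by_cases h1 : (i:ℕ) = jj
    · subst h1
      rw [if_pos rfl, if_pos rfl, if_neg (show ¬((i:ℕ) = (i:ℕ)+1) by omega)]
      rcases Nat.lt_or_ge (i:ℕ) 1 with h2 | h2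
      · rw [if_neg (by omega)]; ring
      · rw [if_pos h2, if_neg (by omega)]; ring
    · by_cases h2 : (i:ℕ)+1 = jj
      · subst h2
        rw [if_neg h1, if_pos rfl, if_neg (by omega), if_pos rfl]
        rcases Nat.lt_or_ge (i:ℕ) 1 with h3 | h3
        · rw [if_neg (by omega)]; ring
        · rw [if_pos h3, if_neg (by omega)]; ring
      · by_cases h3 : jj + 1 = (i:ℕ)
        · have hjj' : jj = (i:ℕ) - 1 := by omega
          have h1i : 1 ≤ (i:ℕ) := by omega
          rw [if_neg h1, if_neg h2, if_pos h3, if_neg (by omega), if_neg (by omega),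
            if_pos h1i, if_pos hjj', h3, hjj']
          ring
        · rw [if_neg h1, if_neg h2, if_neg h3, if_neg (by omega), if_neg (by omega)]
          rcases Nat.lt_or_ge (i:ℕ) 1 with h4 | h4
          · rw [if_neg (by omega)]; ring
          · rw [if_pos h4, if_neg (by omega)]; ring
  rw [Finset.sum_congr rfl step2]
  rw [Finset.sum_add_distrib, Finset.sum_add_distrib, Finset.sum_ite_eq', Finset.sum_ite_eq']
  rw [if_pos (Finset.mem_range.mpr hi)]
  by_cases hi1 : 1 ≤ (i:ℕ)
  · simp only [if_pos hi1]
    rw [Finset.sum_ite_eq', if_pos (Finset.mem_range.mpr (show (i:ℕ)-1 < n-1 by omega))]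
    obtain ⟨j, hj⟩ : ∃ j, (i:ℕ) = j+1 := ⟨(i:ℕ)-1, by omega⟩
    have hrow := rowS n k j hn hk2 (by omega)
    by_cases h2 : (i:ℕ)+1 ∈ Finset.range (n-1)
    · have h2' : (i:ℕ)+1 < n-1 := Finset.mem_range.mp h2
      rw [if_pos h2, offA_gg n ((i:ℕ)+1) (by omega), offA_gg n (i:ℕ) (by omega), hj]
      rw [show j+1-1 = j from rfl]
      linarith [hrow]
    · have h2' : ¬ ((i:ℕ)+1 < n-1) := fun hc => h2 (Finset.mem_range.mpr hc)
      rw [if_neg h2, offA_gg n (i:ℕ) (by omega), hj]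
      rw [show j+1-1 = j from rfl]
      have hmid : uu n k (j+2) = 0 := by
        have := uu_mid n k hn hk2
        rwa [show n-1 = j+2 by omega] at this
      have hz : gg n (j+2) * uu n k (j+2) = 0 := by rw [hmid]; ring
      linarith [hrow, hz]
  · simp only [if_neg hi1, Finset.sum_const_zero]
    have hrow := row0 n k hn hk2
    have hi0 : (i:ℕ) = 0 := by omega
    by_cases h2 : (i:ℕ)+1 ∈ Finset.range (n-1)
    · have h2' : (i:ℕ)+1 < n-1 := Finset.mem_range.mp h2
      rw [if_pos h2, hi0, offA_gg n 1 (by omega)]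
      linarith [hrow]
    · have h2' : ¬ ((i:ℕ)+1 < n-1) := fun hc => h2 (Finset.mem_range.mpr hc)
      rw [if_neg h2, hi0]
      have hmid : uu n k 1 = 0 := by
        have := uu_mid n k hn hk2
        rwa [show n-1 = 1 by omega] at this
      have hz : gg n 1 * uu n k 1 = 0 := by rw [hmid]; ring
      linarith [hrow, hz]


theorem stmt_2 (n : ℕ) (hn : 2 ≤ n) :
    spectrum ℝ (AmatSub n) = {x : ℝ | ∃ k < n - 1, x = 2 * (k : ℝ) + 1} := by
  have hcharroot : ∀ k : ℕ, k < n-1 → (AmatSub n).charpoly.IsRoot (2*(k:ℝ)+1) := by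
    intro k hk
    show Polynomial.eval _ _ = 0
    rw [charpoly_eval, ← Matrix.exists_mulVec_eq_zero_iff]
    refine ⟨fun j => uu n k (j:ℕ), ?_, ?_⟩
    · intro hzero
      have h0 := congrFun hzero (⟨0, by omega⟩ : Fin (n-1))
      simp only [uu_zero] at h0
      exact one_ne_zero h0
    · funext ii
      rw [Matrix.sub_mulVec]
      have hs : (Matrix.scalar (Fin (n-1)) (2*(k:ℝ)+1)).mulVec (fun j => uu n k (j:ℕ)) ii
          = (2*(k:ℝ)+1) * uu n k (ii:ℕ) := by
        rw [Matrix.scalar_apply, Matrix.mulVec_diagonal]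
      rw [Pi.sub_apply, hs, eigen_sum n k hn hk ii, Pi.zero_apply, sub_self]
  have hmonic := (AmatSub n).charpoly_monic
  have hdeg : (AmatSub n).charpoly.natDegree = n-1 := by
    rw [Matrix.charpoly_natDegree_eq_dim]; simp
  set s : Multiset ℝ := (Multiset.range (n-1)).map (fun k : ℕ => 2*(k:ℝ)+1) with hsdef
  have hsnodup : s.Nodup := by
    refine Multiset.Nodup.map ?_ (Multiset.nodup_range _)
    intro a b hab
    have : (a:ℝ) = b := by dsimp at hab; linarith
    exact_mod_cast this
  have hle : s ≤ (AmatSub n).charpoly.roots := by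
    rw [Multiset.le_iff_subset hsnodup]
    intro x hx
    obtain ⟨k, hk, rfl⟩ := Multiset.mem_map.mp hx
    rw [Polynomial.mem_roots hmonic.ne_zero]
    exact hcharroot k (Multiset.mem_range.mp hk)
  have hcards : Multiset.card s = n - 1 := by simp [hsdef]
  have heq : s = (AmatSub n).charpoly.roots := by
    apply Multiset.eq_of_le_of_card_le hle
    calc Multiset.card (AmatSub n).charpoly.roots ≤ (AmatSub n).charpoly.natDegree :=
        (AmatSub n).charpoly.card_roots'
    _ = n - 1 := hdeg
    _ = Multiset.card s := hcards.symm
  ext x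
  simp only [Set.mem_setOf_eq]
  rw [mem_spec]
  have : ((AmatSub n).charpoly.eval x = 0) ↔ x ∈ (AmatSub n).charpoly.roots := by
    rw [Polynomial.mem_roots hmonic.ne_zero]
    exact Iff.rfl
  rw [this, ← heq]
  simp only [hsdef, Multiset.mem_map, Multiset.mem_range]
  constructor
  · rintro ⟨k, hk, rfl⟩
    exact ⟨k, hk, rfl⟩
  · rintro ⟨k, hk, rfl⟩
    exact ⟨k, hk, rfl⟩
end

section
/- Let B = A°(n+1) − nI (an n×n matrix) and A = A(n) − (n−1)I. Define the n×n upper triangular matrix R by r_{ij} = √(k·(j−1)!(2n−j−1)!/((i−1)!(2n−i+1)!)) when i and j have the same parity and j ≥ i (with k = 2 if j ≠ n and k = 1 if j = n), and r_{ij} = 0 otherwise. Then BR = RA, and R is invertible, so B and A are similar. -/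
/-- The upper triangular similarity matrix `R` (entries 1-indexed as `(i+1, j+1)`):
`r_{IJ} = √(k (J-1)! (2n-J-1)! / ((I-1)! (2n-I+1)!))` when `I, J` have the same
parity and `J ≥ I`, with `k = 2` if `J ≠ n` and `k = 1` if `J = n`; otherwise `0`. -/
noncomputable def Rmat (n : ℕ) : Matrix (Fin n) (Fin n) ℝ :=
  Matrix.of fun i j =>
    if (i : ℕ) % 2 = (j : ℕ) % 2 ∧ (i : ℕ) ≤ (j : ℕ) then
      Real.sqrt ((if (j : ℕ) + 1 = n then (1 : ℝ) else 2) *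
        (Nat.factorial (j : ℕ)) * (Nat.factorial (2 * n - (j : ℕ) - 2)) /
        ((Nat.factorial (i : ℕ)) * (Nat.factorial (2 * n - (i : ℕ)))))
    else 0

/-- scalar version of `Rmat` entries -/
noncomputable def rN (n i j : ℕ) : ℝ :=
  if i % 2 = j % 2 ∧ i ≤ j then
    Real.sqrt ((if j + 1 = n then (1 : ℝ) else 2) *
      (Nat.factorial j) * (Nat.factorial (2 * n - j - 2)) /
      ((Nat.factorial i) * (Nat.factorial (2 * n - i))))
  else 0

/-- scalar version of the entries of `B = A°(n+1) - n I` -/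
noncomputable def bN (n i k : ℕ) : ℝ :=
  if k = i + 1 then offA (n + 1) (i + 1)
  else if k + 1 = i then offA (n + 1) (k + 1) else 0

/-- scalar version of the entries of `A = A(n) - (n-1) I` -/
noncomputable def aN (n k j : ℕ) : ℝ :=
  if j = k + 1 then offA n (k + 1)
  else if j + 1 = k then offA n (j + 1) else 0

lemma rN_eq_zero {n i j : ℕ} (h : ¬ (i % 2 = j % 2 ∧ i ≤ j)) : rN n i j = 0 :=
  if_neg h


/-- the square-root appearing in `rN n i j` (without the support condition) -/
noncomputable def sqD (n i j : ℕ) : ℝ :=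
  Real.sqrt ((if j + 1 = n then (1 : ℝ) else 2) *
    (Nat.factorial j) * (Nat.factorial (2 * n - j - 2)) /
    ((Nat.factorial i) * (Nat.factorial (2 * n - i))))

lemma rN_eq_sqD {n i j : ℕ} (h : i % 2 = j % 2 ∧ i ≤ j) : rN n i j = sqD n i j :=
  if_pos h

lemma sqrt_mul_sqrt_eq {A B D C : ℝ} (hA : 0 ≤ A) (hC : 0 ≤ C) (h : A * B = C ^ 2 * D) :
    Real.sqrt A * Real.sqrt B = C * Real.sqrt D := by
  rw [← Real.sqrt_mul hA, h, Real.sqrt_mul (by positivity), Real.sqrt_sq hC]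

lemma factR_ne (m : ℕ) : ((Nat.factorial m : ℝ)) ≠ 0 := by positivity

lemma T1 {n i : ℕ} (j : ℕ) (h : i + 1 < n) :
    offA (n + 1) (i + 1) * sqD n (i + 1) j = ((2 * n - i : ℕ) : ℝ) / 2 * sqD n i j := by
  have hA : (2 * (((n:ℕ)+1:ℕ):ℝ) - (((i:ℕ)+1:ℕ):ℝ) - 1) = ((2 * n - i : ℕ) : ℝ) := by
    rw [Nat.cast_sub (by omega)]; push_cast; ring
  rw [offA, if_neg (by omega), sqD, sqD, hA, mul_assoc]
  rw [sqrt_mul_sqrt_eq (by positivity) (by positivity)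
    (?_ : ((i + 1 : ℕ):ℝ) * ((2 * n - i : ℕ):ℝ) * _ = ((2 * n - i : ℕ):ℝ) ^ 2 * _)]
  · ring
  · have e1 : 2 * n - i = (2 * n - (i + 1)) + 1 := by omega
    rw [e1]
    simp only [Nat.factorial_succ]
    push_cast
    field_simp

lemma T2 {n i : ℕ} (j : ℕ) (h1 : 1 ≤ i) (h : i < n) :
    offA (n + 1) i * sqD n (i - 1) j = ((i : ℕ) : ℝ) / 2 * sqD n i j := by
  obtain ⟨p, rfl⟩ : ∃ p, i = p + 1 := ⟨i - 1, by omega⟩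
  simp only [Nat.add_sub_cancel]
  have hA : (2 * (((n:ℕ)+1:ℕ):ℝ) - ((p+1:ℕ):ℝ) - 1) = ((2 * n - p : ℕ) : ℝ) := by
    rw [Nat.cast_sub (by omega)]; push_cast; ring
  rw [offA, if_neg (by omega), sqD, sqD, hA, mul_assoc]
  rw [sqrt_mul_sqrt_eq (by positivity) (by positivity)
    (?_ : ((p + 1 : ℕ):ℝ) * ((2 * n - p : ℕ):ℝ) * _ = ((p + 1 : ℕ):ℝ) ^ 2 * _)]
  · ring
  · have e1 : 2 * n - p = (2 * n - (p + 1)) + 1 := by omega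
    rw [e1]
    simp only [Nat.factorial_succ]
    push_cast
    field_simp

lemma T3 {n i : ℕ} (j : ℕ) (hn : 2 ≤ n) (h : j + 1 < n) :
    offA n (j + 1) * sqD n i (j + 1) = ((j + 1 : ℕ) : ℝ) / 2 * sqD n i j := by
  rcases eq_or_ne (j + 2) n with h2 | h2
  · -- special case j + 1 = n - 1
    subst h2
    have e1 : 2 * (j + 2) - (j + 1) - 2 = j + 1 := by omega
    have e2 : 2 * (j + 2) - j - 2 = j + 2 := by omega
    have hf2 : Nat.factorial (j + 2) = (j + 2) * ((j + 1) * Nat.factorial j) := by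
      rw [show j + 2 = (j + 1) + 1 from rfl, Nat.factorial_succ, Nat.factorial_succ]
    rw [offA, if_pos (by omega), sqD, sqD, e1, e2,
      if_pos (by omega : (j + 1) + 1 = j + 2), if_neg (by omega : ¬ j + 1 = j + 2)]
    refine sqrt_mul_sqrt_eq ?_ (by positivity) ?_
    · have hc : (1:ℝ) ≤ ((j + 2 : ℕ) : ℝ) := by exact_mod_cast (by omega : 1 ≤ j + 2)
      have h0 : (0:ℝ) ≤ ((j + 2 : ℕ) : ℝ) := by positivity
      nlinarith
    · simp only [hf2, Nat.factorial_succ]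
      push_cast
      field_simp
      ring
  · -- generic case
    have hA : (2 * ((n:ℕ):ℝ) - ((j+1:ℕ):ℝ) - 1) = ((2 * n - j - 2 : ℕ) : ℝ) := by
      rw [show 2*n - j - 2 = 2*n - (j + 2) from by omega, Nat.cast_sub (by omega)]
      push_cast; ring
    rw [offA, if_neg (by omega), sqD, sqD, hA,
      if_neg (by omega : ¬ (j + 1) + 1 = n), if_neg (by omega : ¬ j + 1 = n), mul_assoc]
    rw [sqrt_mul_sqrt_eq (by positivity) (by positivity)
      (?_ : ((j + 1 : ℕ):ℝ) * ((2 * n - j - 2 : ℕ):ℝ) * _ = ((j + 1 : ℕ):ℝ) ^ 2 * _)]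
    · ring
    · have e1 : 2 * n - j - 2 = (2 * n - (j + 1) - 2) + 1 := by omega
      rw [e1]
      simp only [Nat.factorial_succ]
      push_cast
      field_simp

lemma T4 {n i j : ℕ} (hn : 2 ≤ n) (h1 : 1 ≤ j) (h : j < n) :
    offA n j * sqD n i (j - 1)
      = (((if j + 1 = n then 2 * n else 2 * n - j - 1) : ℕ) : ℝ) / 2 * sqD n i j := by
  obtain ⟨p, rfl⟩ : ∃ p, j = p + 1 := ⟨j - 1, by omega⟩
  simp only [Nat.add_sub_cancel]
  rcases eq_or_ne (p + 2) n with h2 | h2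
  · -- special case p + 1 = n - 1
    subst h2
    have e1 : 2 * (p + 2) - p - 2 = p + 2 := by omega
    have e2 : 2 * (p + 2) - (p + 1) - 2 = p + 1 := by omega
    have hf2 : Nat.factorial (p + 2) = (p + 2) * ((p + 1) * Nat.factorial p) := by
      rw [show p + 2 = (p + 1) + 1 from rfl, Nat.factorial_succ, Nat.factorial_succ]
    rw [offA, if_pos (by omega), sqD, sqD, e1, e2,
      if_pos (by omega : (p + 1) + 1 = p + 2), if_neg (by omega : ¬ p + 1 = p + 2),
      if_pos (by omega : p + 1 + 1 = p + 2)]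
    refine sqrt_mul_sqrt_eq ?_ (by positivity) ?_
    · have hc : (1:ℝ) ≤ ((p + 2 : ℕ) : ℝ) := by exact_mod_cast (by omega : 1 ≤ p + 2)
      have h0 : (0:ℝ) ≤ ((p + 2 : ℕ) : ℝ) := by positivity
      nlinarith
    · simp only [hf2, Nat.factorial_succ]
      push_cast
      field_simp
      ring
  · -- generic case
    have hA : (2 * ((n:ℕ):ℝ) - ((p+1:ℕ):ℝ) - 1) = ((2 * n - p - 2 : ℕ) : ℝ) := by
      rw [show 2*n - p - 2 = 2*n - (p + 2) from by omega, Nat.cast_sub (by omega)]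
      push_cast; ring
    rw [offA, if_neg (by omega), sqD, sqD, hA,
      if_neg (by omega : ¬ p + 1 = n), if_neg (by omega : ¬ (p + 1) + 1 = n),
      if_neg (by omega : ¬ (p + 1) + 1 = n), mul_assoc]
    rw [show 2 * n - (p + 1) - 1 = 2 * n - p - 2 from by omega]
    rw [sqrt_mul_sqrt_eq (by positivity) (by positivity)
      (?_ : ((p + 1 : ℕ):ℝ) * ((2 * n - p - 2 : ℕ):ℝ) * _ = ((2 * n - p - 2 : ℕ):ℝ) ^ 2 * _)]
    · ring
    · have e1 : 2 * n - p - 2 = (2 * n - (p + 1) - 2) + 1 := by omega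
      rw [e1]
      simp only [Nat.factorial_succ]
      push_cast
      field_simp

lemma B_entry (n : ℕ) (i k : Fin n) :
    ((Amat (n + 1)).submatrix Fin.castSucc Fin.castSucc
        - (n : ℝ) • (1 : Matrix (Fin n) (Fin n) ℝ)) i k = bN n i k := by
  simp only [Matrix.sub_apply, Matrix.submatrix_apply, Matrix.smul_apply,
    Matrix.one_apply, Amat, Matrix.of_apply, Fin.coe_castSucc, bN, smul_eq_mul,
    Fin.ext_iff]
  split_ifs <;> first | omega | (push_cast; ring)

lemma A_entry (n : ℕ) (k j : Fin n) :
    (Amat n - ((n : ℝ) - 1) • (1 : Matrix (Fin n) (Fin n) ℝ)) k j = aN n k j := by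
  simp only [Matrix.sub_apply, Matrix.smul_apply, Matrix.one_apply, Amat,
    Matrix.of_apply, aN, smul_eq_mul, Fin.ext_iff]
  split_ifs <;> first | omega | (push_cast; ring)

lemma R_entry (n : ℕ) (i j : Fin n) : Rmat n i j = rN n i j := rfl

lemma sum_two_band {n i : ℕ} (hi : i < n) (F : ℕ → ℝ)
    (hF : ∀ k, k ≠ i + 1 → k + 1 ≠ i → F k = 0) :
    ∑ k ∈ Finset.range n, F k
      = (if i + 1 < n then F (i + 1) else 0) + (if 1 ≤ i then F (i - 1) else 0) := by
  have h1 : ∀ k ∈ Finset.range n,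
      F k = (if k = i + 1 then F k else 0) + (if k = i - 1 ∧ 1 ≤ i then F k else 0) := by
    intro k _
    by_cases h : k = i + 1
    · simp [h, show ¬(i + 1 = i - 1 ∧ 1 ≤ i) by omega]
    · by_cases h2 : k + 1 = i
      · simp [h, show k = i - 1 ∧ 1 ≤ i by omega]
      · simp [h, hF k h h2, show ¬(k = i - 1 ∧ 1 ≤ i) by omega]
  rw [Finset.sum_congr rfl h1, Finset.sum_add_distrib]
  congr 1
  · rw [Finset.sum_ite_eq' (Finset.range n) (i + 1) F]
    simp [Finset.mem_range]
  · by_cases h : 1 ≤ i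
    · simp only [h, and_true]
      rw [Finset.sum_ite_eq' (Finset.range n) (i - 1) F]
      simp [Finset.mem_range]
      omega
    · simp [h, show ∀ k : ℕ, ¬(k = i - 1 ∧ 1 ≤ i) from fun k hh => h hh.2]


lemma key (n i j : ℕ) (hn : 2 ≤ n) (hi : i < n) (hj : j < n) :
    (if i + 1 < n then bN n i (i + 1) * rN n (i + 1) j else 0)
      + (if 1 ≤ i then bN n i (i - 1) * rN n (i - 1) j else 0)
    = (if j + 1 < n then rN n i (j + 1) * aN n (j + 1) j else 0)
      + (if 1 ≤ j then rN n i (j - 1) * aN n (j - 1) j else 0) := by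
  by_cases hpar : i % 2 = j % 2
  · -- same parity : everything vanishes
    have e1 : (if i + 1 < n then bN n i (i + 1) * rN n (i + 1) j else 0) = 0 := by
      split_ifs with h
      · rw [rN_eq_zero (by omega), mul_zero]
      · rfl
    have e2 : (if 1 ≤ i then bN n i (i - 1) * rN n (i - 1) j else 0) = 0 := by
      split_ifs with h
      · rw [rN_eq_zero (by omega), mul_zero]
      · rfl
    have e3 : (if j + 1 < n then rN n i (j + 1) * aN n (j + 1) j else 0) = 0 := by
      split_ifs with h
      · rw [rN_eq_zero (by omega), zero_mul]
      · rfl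
    have e4 : (if 1 ≤ j then rN n i (j - 1) * aN n (j - 1) j else 0) = 0 := by
      split_ifs with h
      · rw [rN_eq_zero (by omega), zero_mul]
      · rfl
    rw [e1, e2, e3, e4]
  · rcases Nat.lt_or_ge i j with hlt | hge
    · -- case i < j
      have hL1 : (if i + 1 < n then bN n i (i + 1) * rN n (i + 1) j else 0)
          = ((2 * n - i : ℕ) : ℝ) / 2 * sqD n i j := by
        rw [if_pos (by omega), bN, if_pos rfl, rN_eq_sqD ⟨by omega, by omega⟩]
        exact T1 j (by omega)
      have hL2 : (if 1 ≤ i then bN n i (i - 1) * rN n (i - 1) j else 0)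
          = ((i : ℕ) : ℝ) / 2 * sqD n i j := by
        split_ifs with h
        · rw [bN, if_neg (by omega), if_pos (by omega),
            show i - 1 + 1 = i from by omega, rN_eq_sqD ⟨by omega, by omega⟩]
          exact T2 j h hi
        · rw [show i = 0 from by omega]
          norm_num
      have hR2 : (if 1 ≤ j then rN n i (j - 1) * aN n (j - 1) j else 0)
          = (((if j + 1 = n then 2 * n else 2 * n - j - 1) : ℕ) : ℝ) / 2 * sqD n i j := by
        rw [if_pos (by omega), aN, if_pos (by omega : j = j - 1 + 1),
          show j - 1 + 1 = j from by omega, rN_eq_sqD ⟨by omega, by omega⟩, mul_comm]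
        exact T4 hn (by omega) hj
      rw [hL1, hL2, hR2]
      rcases eq_or_ne (j + 1) n with hjn | hjn
      · rw [if_neg (by omega), if_pos hjn]
        rw [Nat.cast_sub (by omega)]
        push_cast
        ring
      · rw [if_pos (by omega), if_neg hjn, aN, if_neg (by omega), if_pos rfl,
          rN_eq_sqD ⟨by omega, by omega⟩, mul_comm (sqD n i (j + 1)) (offA n (j + 1))]
        rw [T3 j hn (by omega)]
        rw [Nat.cast_sub (by omega : i ≤ 2 * n),
          show 2 * n - j - 1 = 2 * n - (j + 1) from by omega,
          Nat.cast_sub (by omega : j + 1 ≤ 2 * n)]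
        push_cast
        ring
    · rcases eq_or_ne i (j + 1) with heq | hne
      · -- case i = j + 1
        subst heq
        have hL1 : (if j + 1 + 1 < n then bN n (j + 1) (j + 1 + 1) * rN n (j + 1 + 1) j else 0)
            = 0 := by
          split_ifs with h
          · rw [rN_eq_zero (by omega), mul_zero]
          · rfl
        have hR2 : (if 1 ≤ j then rN n (j + 1) (j - 1) * aN n (j - 1) j else 0) = 0 := by
          split_ifs with h
          · rw [rN_eq_zero (by omega), zero_mul]
          · rfl
        rw [hL1, hR2, if_pos (by omega), if_pos (by omega : j + 1 < n), bN,
          if_neg (by omega), if_pos (by omega), show j + 1 - 1 + 1 = j + 1 from by omega,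
          show j + 1 - 1 = j from by omega, rN_eq_sqD ⟨by omega, by omega⟩,
          aN, if_neg (by omega), if_pos rfl, rN_eq_sqD ⟨by omega, by omega⟩,
          mul_comm (sqD n (j + 1) (j + 1)) (offA n (j + 1))]
        have h2 := T2 (n := n) (i := j + 1) j (by omega) hi
        rw [Nat.add_sub_cancel] at h2
        rw [h2, T3 j hn (by omega)]
        ring
      · -- case i ≥ j + 2 : everything vanishes
        have hgt : j + 2 ≤ i := by omega
        have e1 : (if i + 1 < n then bN n i (i + 1) * rN n (i + 1) j else 0) = 0 := by
          split_ifs with h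
          · rw [rN_eq_zero (by omega), mul_zero]
          · rfl
        have e2 : (if 1 ≤ i then bN n i (i - 1) * rN n (i - 1) j else 0) = 0 := by
          split_ifs with h
          · rw [rN_eq_zero (by omega), mul_zero]
          · rfl
        have e3 : (if j + 1 < n then rN n i (j + 1) * aN n (j + 1) j else 0) = 0 := by
          split_ifs with h
          · rw [rN_eq_zero (by omega), zero_mul]
          · rfl
        have e4 : (if 1 ≤ j then rN n i (j - 1) * aN n (j - 1) j else 0) = 0 := by
          split_ifs with h
          · rw [rN_eq_zero (by omega), zero_mul]
          · rfl
        rw [e1, e2, e3, e4]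

theorem stmt_3 (n : ℕ) (hn : 2 ≤ n) :
    ((Amat (n + 1)).submatrix Fin.castSucc Fin.castSucc - (n : ℝ) • (1 : Matrix (Fin n) (Fin n) ℝ)) * Rmat n
        = Rmat n * (Amat n - ((n : ℝ) - 1) • (1 : Matrix (Fin n) (Fin n) ℝ)) ∧
      IsUnit (Rmat n) := by
  constructor
  · ext i j
    rw [Matrix.mul_apply, Matrix.mul_apply]
    have hL : ∀ k : Fin n,
        ((Amat (n + 1)).submatrix Fin.castSucc Fin.castSucc
          - (n : ℝ) • (1 : Matrix (Fin n) (Fin n) ℝ)) i k * Rmat n k j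
        = bN n (i : ℕ) (k : ℕ) * rN n (k : ℕ) (j : ℕ) := fun k => by
      rw [B_entry, R_entry]
    have hR : ∀ k : Fin n,
        Rmat n i k * (Amat n - ((n : ℝ) - 1) • (1 : Matrix (Fin n) (Fin n) ℝ)) k j
        = rN n (i : ℕ) (k : ℕ) * aN n (k : ℕ) (j : ℕ) := fun k => by
      rw [A_entry, R_entry]
    rw [Finset.sum_congr rfl fun k _ => hL k, Finset.sum_congr rfl fun k _ => hR k]
    rw [Fin.sum_univ_eq_sum_range (fun k => bN n (i : ℕ) k * rN n k (j : ℕ)) n,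
      Fin.sum_univ_eq_sum_range (fun k => rN n (i : ℕ) k * aN n k (j : ℕ)) n]
    rw [sum_two_band i.isLt _ (fun k hk1 hk2 => by
      rw [bN, if_neg hk1, if_neg hk2, zero_mul])]
    rw [sum_two_band j.isLt _ (fun k hk1 hk2 => by
      rw [aN, if_neg (fun hh => hk2 hh.symm), if_neg (fun hh => hk1 hh.symm), mul_zero])]
    exact key n i j hn i.isLt j.isLt
  · -- invertibility
    rw [Matrix.isUnit_iff_isUnit_det, isUnit_iff_ne_zero]
    have htri : (Rmat n).BlockTriangular id := by
      intro i j hij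
      exact rN_eq_zero (by simp at hij; omega)
    rw [Matrix.det_of_upperTriangular htri]
    have hpos : ∀ i : Fin n, 0 < Rmat n i i := by
      intro i
      have : Rmat n i i = Real.sqrt ((if (i : ℕ) + 1 = n then (1 : ℝ) else 2) *
          (Nat.factorial (i : ℕ)) * (Nat.factorial (2 * n - (i : ℕ) - 2)) /
          ((Nat.factorial (i : ℕ)) * (Nat.factorial (2 * n - (i : ℕ))))) := if_pos ⟨rfl, le_refl _⟩
      rw [this]
      apply Real.sqrt_pos.mpr
      have h1 : (0:ℝ) < (if (i : ℕ) + 1 = n then (1 : ℝ) else 2) := by split <;> norm_num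
      have h2 : ∀ m : ℕ, (0:ℝ) < (Nat.factorial m) :=
        fun m => by exact_mod_cast Nat.factorial_pos m
      exact div_pos (mul_pos (mul_pos h1 (h2 _)) (h2 _)) (mul_pos (h2 _) (h2 _))
    exact ne_of_gt (Finset.prod_pos (fun i _ => hpos i))
end

section
/- Let C = A(n+1) − 2nI. Then C = −LLᵀ where L is the (n+1)×(n+1) lower bidiagonal matrix with l_{ii} = √((2n−i+1)/2) for i=1,…,n−1, l_{i+1,i} = −√(i/2) for i=1,…,n−1, l_{nn} = √((n+1)/2), l_{n+1,n} = −√n, and l_{n+1,n+1} = 0. -/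
/-- The lower bidiagonal matrix `L` of size `(n+1) × (n+1)` (entries 1-indexed as `I = i+1`):
`l_{II} = √((2n-I+1)/2)` for `I ≤ n-1`, `l_{nn} = √((n+1)/2)`, `l_{n+1,n+1} = 0`,
`l_{I+1,I} = -√(I/2)` for `I ≤ n-1`, `l_{n+1,n} = -√n`. -/
noncomputable def Lmat (n : ℕ) : Matrix (Fin (n + 1)) (Fin (n + 1)) ℝ :=
  Matrix.of fun i j =>
    if (i : ℕ) = (j : ℕ) then
      (if (i : ℕ) + 1 < n then Real.sqrt ((2 * n - i) / 2)
       else if (i : ℕ) + 1 = n then Real.sqrt ((n + 1) / 2)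
       else 0)
    else if (j : ℕ) + 1 = (i : ℕ) then
      (if (j : ℕ) + 1 < n then -Real.sqrt ((j + 1) / 2)
       else -Real.sqrt n)
    else 0

private lemma Lmat_diag (n : ℕ) (i : Fin (n + 1)) :
    Lmat n i i =
      (if (i : ℕ) + 1 < n then Real.sqrt ((2 * n - (i : ℕ)) / 2)
       else if (i : ℕ) + 1 = n then Real.sqrt (((n : ℝ) + 1) / 2) else 0) := by
  simp only [Lmat, Matrix.of_apply, if_true, eq_self_iff_true]

private lemma Lmat_sub (n : ℕ) (i j : Fin (n + 1)) (h : (j : ℕ) + 1 = (i : ℕ)) :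
    Lmat n i j =
      (if (j : ℕ) + 1 < n then -Real.sqrt (((j : ℕ) + 1 : ℝ) / 2)
       else -Real.sqrt n) := by
  simp only [Lmat, Matrix.of_apply]
  rw [if_neg (by omega), if_pos h]

private lemma Lmat_zero (n : ℕ) (i j : Fin (n + 1)) (h1 : (i : ℕ) ≠ (j : ℕ))
    (h2 : (j : ℕ) + 1 ≠ (i : ℕ)) : Lmat n i j = 0 := by
  simp only [Lmat, Matrix.of_apply]
  rw [if_neg h1, if_neg h2]

private lemma half_sqrt (y : ℝ) (hy : 0 ≤ y) :
    (1 / 2 : ℝ) * Real.sqrt y = Real.sqrt (y / 4) := by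
  rw [show y / 4 = y * (1/2)^2 by ring, Real.sqrt_mul hy, Real.sqrt_sq (by norm_num)]
  ring

/-- diagonal identity, i = 0 case -/
private lemma diag0 (n : ℕ) (hn : 1 ≤ n) :
    ((n : ℝ) + 1) - 1 - 2 * n =
      -((if 0 + 1 < n then Real.sqrt ((2 * n - 0) / 2)
         else if 0 + 1 = n then Real.sqrt (((n:ℝ) + 1) / 2) else 0) *
        (if 0 + 1 < n then Real.sqrt ((2 * n - 0) / 2)
         else if 0 + 1 = n then Real.sqrt (((n:ℝ) + 1) / 2) else 0)) := by
  have hn' : (1:ℝ) ≤ n := by exact_mod_cast hn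
  rcases lt_or_eq_of_le hn with h | h
  · rw [if_pos (by omega), Real.mul_self_sqrt (by linarith)]
    ring
  · rw [if_neg (by omega), if_pos (by omega), Real.mul_self_sqrt (by linarith)]
    rw [← h]; norm_num

/-- diagonal identity, i = m+1 case -/
private lemma diagS (n m : ℕ) (hn : 1 ≤ n) (hm : m + 1 ≤ n) :
    ((n : ℝ) + 1) - 1 - 2 * n =
      -((if m + 1 + 1 < n then Real.sqrt ((2 * n - ((m:ℝ) + 1)) / 2)
         else if m + 1 + 1 = n then Real.sqrt (((n:ℝ) + 1) / 2) else 0) *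
        (if m + 1 + 1 < n then Real.sqrt ((2 * n - ((m:ℝ) + 1)) / 2)
         else if m + 1 + 1 = n then Real.sqrt (((n:ℝ) + 1) / 2) else 0) +
        (if m + 1 < n then -Real.sqrt (((m:ℝ) + 1) / 2) else -Real.sqrt n) *
        (if m + 1 < n then -Real.sqrt (((m:ℝ) + 1) / 2) else -Real.sqrt n)) := by
  have hm' : ((m:ℝ) + 1) ≤ n := by exact_mod_cast hm
  have hmn : (0:ℝ) ≤ (m:ℝ) := by positivity
  rcases lt_trichotomy (m + 1 + 1) n with h | h | h
  · rw [if_pos h, if_pos (by omega), Real.mul_self_sqrt (by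
      have : ((m:ℝ) + 1 + 1) ≤ n := by exact_mod_cast h.le
      linarith),
      neg_mul_neg, Real.mul_self_sqrt (by linarith)]
    ring
  · have h' : ((m:ℝ) + 1 + 1) = n := by exact_mod_cast h
    rw [if_neg (by omega), if_pos h, if_pos (by omega),
      Real.mul_self_sqrt (by linarith), neg_mul_neg, Real.mul_self_sqrt (by linarith)]
    linarith
  · have hmn' : m + 1 = n := by omega
    have h' : ((m:ℝ) + 1) = n := by exact_mod_cast hmn'
    rw [if_neg (by omega), if_neg (by omega), if_neg (by omega),
      neg_mul_neg, Real.mul_self_sqrt (by linarith)]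
    linarith

/-- off-diagonal identity -/
private lemma adjL (n k : ℕ) (hn : 1 ≤ n) (hk : k + 1 ≤ n) :
    offA (n + 1) (k + 1) =
      -((if k + 1 < n then Real.sqrt ((2 * n - (k:ℝ)) / 2)
         else if k + 1 = n then Real.sqrt (((n:ℝ) + 1) / 2) else 0) *
        (if k + 1 < n then -Real.sqrt (((k:ℝ) + 1) / 2) else -Real.sqrt n)) := by
  have hk' : ((k:ℝ) + 1) ≤ n := by exact_mod_cast hk
  have hk0 : (0:ℝ) ≤ (k:ℝ) := by positivity
  rcases lt_or_eq_of_le hk with h | h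
  · have h' : ((k:ℝ) + 1) < n := by exact_mod_cast h
    rw [if_pos h, if_pos h, mul_neg, neg_neg, ← Real.sqrt_mul (by linarith)]
    rw [offA, if_neg (by omega)]
    rw [half_sqrt _ (by push_cast; nlinarith)]
    congr 1
    push_cast
    ring
  · rw [if_neg (show ¬(k + 1 < n) by omega), if_pos h,
      if_neg (show ¬(k + 1 < n) by omega), mul_neg, neg_neg,
      ← Real.sqrt_mul (by linarith)]
    rw [offA, if_pos (by omega)]
    congr 1
    push_cast
    ring

theorem stmt_4 (n : ℕ) (hn : 1 ≤ n) :
    Amat (n + 1) - (2 * (n : ℝ)) • (1 : Matrix (Fin (n + 1)) (Fin (n + 1)) ℝ)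
      = -(Lmat n * (Lmat n).transpose) := by
  ext i j
  rw [Matrix.neg_apply, Matrix.mul_apply, Matrix.sub_apply, Matrix.smul_apply,
    smul_eq_mul]
  simp only [Matrix.transpose_apply]
  rcases lt_trichotomy (i : ℕ) (j : ℕ) with hij | hij | hij
  · -- i < j
    have hne : i ≠ j := Fin.ne_of_val_ne (by omega)
    rw [Matrix.one_apply_ne hne, mul_zero, sub_zero]
    by_cases hadj : (i : ℕ) + 1 = (j : ℕ)
    · -- adjacent
      rw [Finset.sum_eq_single_of_mem i (Finset.mem_univ i) ?side]
      case side =>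
        intro b _ hb
        have hbi : (i : ℕ) ≠ (b : ℕ) := fun h => hb (Fin.ext h.symm)
        by_cases hb1 : (b : ℕ) + 1 = (i : ℕ)
        · rw [Lmat_zero n j b (by omega) (by omega), mul_zero]
        · rw [Lmat_zero n i b hbi hb1, zero_mul]
      have hA : Amat (n + 1) i j = offA (n + 1) ((i : ℕ) + 1) := by
        simp only [Amat, Matrix.of_apply]
        rw [if_neg (by omega), if_pos hadj]
      rw [hA, Lmat_diag, Lmat_sub n j i hadj]
      exact adjL n i hn (by omega)
    · -- far apart
      have hA : Amat (n + 1) i j = 0 := by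
        simp only [Amat, Matrix.of_apply]
        rw [if_neg (by omega), if_neg hadj, if_neg (by omega)]
      rw [hA, Finset.sum_eq_zero, neg_zero]
      intro b _
      by_cases h1 : (i : ℕ) = (b : ℕ)
      · rw [Lmat_zero n j b (by omega) (by omega), mul_zero]
      · by_cases h2 : (b : ℕ) + 1 = (i : ℕ)
        · rw [Lmat_zero n j b (by omega) (by omega), mul_zero]
        · rw [Lmat_zero n i b h1 h2, zero_mul]
  · -- diagonal
    have hij' : i = j := Fin.ext hij
    subst hij'
    rw [Matrix.one_apply_eq, mul_one]
    have hA : Amat (n + 1) i i = ((n : ℕ) + 1 : ℝ) - 1 := by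
      simp only [Amat, Matrix.of_apply, if_true, eq_self_iff_true]
      push_cast; ring
    rw [hA]
    rcases Nat.eq_zero_or_eq_succ_pred (i : ℕ) with hi0 | hi0
    · rw [Finset.sum_eq_single_of_mem i (Finset.mem_univ i) ?side0]
      case side0 =>
        intro b _ hb
        have hbi : (i : ℕ) ≠ (b : ℕ) := fun h => hb (Fin.ext h.symm)
        rw [Lmat_zero n i b hbi (by omega), zero_mul]
      rw [Lmat_diag, hi0]
      push_cast
      exact diag0 n hn
    · set m := (i : ℕ) - 1 with hmdef
      have hm : (i : ℕ) = m + 1 := hi0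
      have hmn : m + 1 ≤ n := by omega
      rw [Finset.sum_eq_add_of_mem i ⟨m, by omega⟩ (Finset.mem_univ _) (Finset.mem_univ _)
        (by intro h; rw [Fin.ext_iff] at h; simp at h; omega) ?sideS]
      case sideS =>
        intro b _ hb
        have hbi : (i : ℕ) ≠ (b : ℕ) := fun h => hb.1 (Fin.ext h.symm)
        have hbm : (b : ℕ) ≠ m := fun h => hb.2 (Fin.ext (by simpa using h))
        rw [Lmat_zero n i b hbi (by omega), zero_mul]
      rw [Lmat_diag, Lmat_sub n i ⟨m, by omega⟩ (by simpa using hm.symm)]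
      simp only [Fin.val_mk]
      rw [hm]
      push_cast
      exact diagS n m hn hmn
  · -- j < i
    have hne : i ≠ j := Fin.ne_of_val_ne (by omega)
    rw [Matrix.one_apply_ne hne, mul_zero, sub_zero]
    by_cases hadj : (j : ℕ) + 1 = (i : ℕ)
    · rw [Finset.sum_eq_single_of_mem j (Finset.mem_univ j) ?side2]
      case side2 =>
        intro b _ hb
        have hbj : (j : ℕ) ≠ (b : ℕ) := fun h => hb (Fin.ext h.symm)
        by_cases hb1 : (b : ℕ) + 1 = (j : ℕ)
        · rw [Lmat_zero n i b (by omega) (by omega), zero_mul]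
        · rw [Lmat_zero n j b hbj hb1, mul_zero]
      have hA : Amat (n + 1) i j = offA (n + 1) ((j : ℕ) + 1) := by
        simp only [Amat, Matrix.of_apply]
        rw [if_neg (by omega), if_neg (by omega), if_pos hadj]
      rw [hA, Lmat_diag, Lmat_sub n i j hadj, mul_comm]
      exact adjL n j hn (by omega)
    · have hA : Amat (n + 1) i j = 0 := by
        simp only [Amat, Matrix.of_apply]
        rw [if_neg (by omega), if_neg (by omega), if_neg hadj]
      rw [hA, Finset.sum_eq_zero, neg_zero]
      intro b _
      by_cases h1 : (j : ℕ) = (b : ℕ)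
      · rw [Lmat_zero n i b (by omega) (by omega), zero_mul]
      · by_cases h2 : (b : ℕ) + 1 = (j : ℕ)
        · rw [Lmat_zero n i b (by omega) (by omega), zero_mul]
        · rw [Lmat_zero n j b h1 h2, mul_zero]
end

section
/- With the bidiagonal matrix L from the factorization A(n+1) − 2nI = −LLᵀ, the matrix D = 2nI − LᵀL is block diagonal of the form [[D°, 0],[0, 2n]], where D° is the n×n symmetric tridiagonal matrix with diagonal entries d_{ii} = (2n−1)/2 for i=1,…,n−1, d_{nn} = (n−1)/2, and off-diagonal entries d_{i+1,i} = d_{i,i+1} = (1/2)√(i(2n−i)) for i=1,…,n−1. -/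
/-- The block-diagonal matrix `[[D°, 0], [0, 2n]]`, where `D°` is the `n × n`
symmetric tridiagonal matrix with diagonal `(2n-1)/2` (except `(n-1)/2` in the
last position) and off-diagonal `(1/2)√(k(2n-k))` at (1-indexed) position `(k, k+1)`. -/
noncomputable def Dfull (n : ℕ) : Matrix (Fin (n + 1)) (Fin (n + 1)) ℝ :=
  Matrix.of fun i j =>
    if (i : ℕ) = (j : ℕ) then
      (if (i : ℕ) + 1 < n then (2 * (n : ℝ) - 1) / 2
       else if (i : ℕ) + 1 = n then ((n : ℝ) - 1) / 2
       else 2 * (n : ℝ))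
    else if (i : ℕ) + 1 = (j : ℕ) ∧ (j : ℕ) < n then
      (1 / 2) * Real.sqrt ((i + 1) * (2 * n - i - 1))
    else if (j : ℕ) + 1 = (i : ℕ) ∧ (i : ℕ) < n then
      (1 / 2) * Real.sqrt ((j + 1) * (2 * n - j - 1))
    else 0

lemma sum_two (n : ℕ) (i : Fin (n + 1)) (f : Fin (n + 1) → ℝ)
    (hf : ∀ k : Fin (n + 1), (k : ℕ) ≠ (i : ℕ) → (k : ℕ) ≠ (i : ℕ) + 1 → f k = 0) :
    ∑ k, f k = f i + (if h : (i : ℕ) + 1 < n + 1 then f ⟨(i : ℕ) + 1, h⟩ else 0) := by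
  by_cases h : (i : ℕ) + 1 < n + 1
  · rw [dif_pos h]
    have hne : i ≠ (⟨(i : ℕ) + 1, h⟩ : Fin (n + 1)) := by
      intro he
      have := congrArg (Fin.val) he
      simp at this
    rw [← Finset.sum_subset (Finset.subset_univ {i, ⟨(i : ℕ) + 1, h⟩})]
    · rw [Finset.sum_pair hne]
    · intro k _ hk
      simp only [Finset.mem_insert, Finset.mem_singleton] at hk
      push_neg at hk
      exact hf k (fun hc => hk.1 (Fin.ext hc)) (fun hc => hk.2 (Fin.ext hc))
  · rw [dif_neg h, add_zero]
    apply Finset.sum_eq_single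
    · intro k _ hk
      exact hf k (fun hc => hk (Fin.ext hc)) (fun hc => absurd (hc ▸ k.isLt) h)
    · simp

lemma sqrt_half_mul (a b : ℝ) (ha : 0 ≤ a) (hb : 0 ≤ b) :
    Real.sqrt (a / 2) * Real.sqrt (b / 2) = (1 / 2) * Real.sqrt (a * b) := by
  rw [← Real.sqrt_mul (by positivity), show a / 2 * (b / 2) = (1/2)^2 * (a * b) by ring,
    Real.sqrt_mul (by positivity), Real.sqrt_sq (by norm_num)]


theorem stmt_5 (n : ℕ) (hn : 1 ≤ n) :
    (2 * (n : ℝ)) • (1 : Matrix (Fin (n + 1)) (Fin (n + 1)) ℝ)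
        - (Lmat n).transpose * Lmat n = Dfull n := by
  ext i j
  rw [Matrix.sub_apply, Matrix.smul_apply, Matrix.one_apply, Matrix.mul_apply, smul_eq_mul]
  simp only [Matrix.transpose_apply]
  rw [sum_two n i (fun k => Lmat n k i * Lmat n k j) (fun k h1 h2 => by
    simp only [Lmat, Matrix.of_apply]
    rw [if_neg h1, if_neg (fun h => h2 h.symm), zero_mul])]
  have hin : (i : ℕ) < n + 1 := i.isLt
  have hjn : (j : ℕ) < n + 1 := j.isLt
  by_cases hij : (i : ℕ) = (j : ℕ)
  · have : i = j := Fin.ext hij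
    subst this
    rw [if_pos rfl]
    rcases lt_trichotomy ((i : ℕ) + 1) n with h1 | h1 | h1
    · rw [dif_pos (by omega)]
      simp only [Lmat, Dfull, Matrix.of_apply, Fin.val_mk, eq_self_iff_true, if_true,
        eq_false (by omega : ¬ ((i:ℕ) + 1 = (i:ℕ))),
        eq_true h1, if_false]
      push_cast
      have ha : (0:ℝ) ≤ (2 * (n:ℝ) - (i:ℕ)) / 2 := by
        have : ((i:ℕ):ℝ) ≤ 2 * n := by exact_mod_cast (by omega : (i:ℕ) ≤ 2 * n)
        linarith
      have hb : (0:ℝ) ≤ (((i:ℕ):ℝ) + 1) / 2 := by positivity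
      rw [Real.mul_self_sqrt ha, neg_mul_neg, Real.mul_self_sqrt hb]
      ring
    · rw [dif_pos (by omega)]
      simp only [Lmat, Dfull, Matrix.of_apply, Fin.val_mk, eq_self_iff_true, if_true,
        eq_false (by omega : ¬ ((i:ℕ) + 1 = (i:ℕ))),
        eq_false (by omega : ¬ ((i:ℕ) + 1 < n)),
        eq_true h1, if_false]
      push_cast
      rw [Real.mul_self_sqrt (by positivity : (0:ℝ) ≤ ((n:ℝ) + 1) / 2), neg_mul_neg,
        Real.mul_self_sqrt (by positivity : (0:ℝ) ≤ (n:ℝ))]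
      ring
    · rw [dif_neg (by omega)]
      simp only [Lmat, Dfull, Matrix.of_apply, eq_self_iff_true, if_true,
        eq_false (by omega : ¬ ((i:ℕ) + 1 < n)),
        eq_false (by omega : ¬ ((i:ℕ) + 1 = n)), if_false]
      ring
  · rw [if_neg (fun h => hij (congrArg Fin.val h))]
    by_cases hsup : (i : ℕ) + 1 = (j : ℕ)
    · rw [dif_pos (by omega)]
      by_cases h1 : (i : ℕ) + 1 < n
      · simp only [Lmat, Dfull, Matrix.of_apply, Fin.val_mk, eq_self_iff_true, if_true,
          eq_false hij, eq_false (by omega : ¬ ((j:ℕ) + 1 = (i:ℕ))),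
          eq_false (by omega : ¬ ((i:ℕ) + 1 = (i:ℕ))),
          eq_true hsup, eq_true h1, eq_true (by omega : (j:ℕ) < n),
          true_and, if_false, mul_zero]
        have hdj : (if (i:ℕ) + 1 + 1 < n then Real.sqrt ((2 * (n:ℝ) - (((i:ℕ) + 1 : ℕ) : ℝ)) / 2)
            else if (i:ℕ) + 1 + 1 = n then Real.sqrt (((n:ℝ) + 1) / 2) else 0)
            = Real.sqrt ((2 * (n:ℝ) - ((i:ℕ):ℝ) - 1) / 2) := by
          rcases lt_trichotomy ((i:ℕ) + 1 + 1) n with h2 | h2 | h2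
          · rw [if_pos h2]; congr 1; push_cast; ring
          · rw [if_neg (by omega), if_pos h2]
            have : ((i:ℕ):ℝ) = (n:ℝ) - 2 := by
              have := congrArg (fun m : ℕ => (m:ℝ)) h2
              push_cast at this; linarith
            rw [this]; congr 1; ring
          · omega
        rw [hdj]
        have hb : (0:ℝ) ≤ 2 * (n:ℝ) - (i:ℕ) - 1 := by
          have : ((i:ℕ):ℝ) + 1 ≤ 2 * n := by exact_mod_cast (by omega : (i:ℕ) + 1 ≤ 2 * n)
          linarith
        rw [neg_mul, sqrt_half_mul (((i:ℕ):ℝ) + 1) (2 * (n:ℝ) - (i:ℕ) - 1) (by positivity) hb]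
        push_cast
        ring
      · simp only [Lmat, Dfull, Matrix.of_apply, Fin.val_mk, eq_self_iff_true, if_true,
          eq_false hij, eq_false (by omega : ¬ ((j:ℕ) + 1 = (i:ℕ))),
          eq_false (by omega : ¬ ((i:ℕ) + 1 = (i:ℕ))),
          eq_true hsup, eq_false h1,
          eq_false (by omega : ¬ ((i:ℕ) + 1 + 1 < n)),
          eq_false (by omega : ¬ ((i:ℕ) + 1 + 1 = n)),
          eq_false (by omega : ¬ ((j:ℕ) < n)),
          true_and, and_false, false_and, if_false, mul_zero]
        ring
    · by_cases hsub : (j : ℕ) + 1 = (i : ℕ)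
      · by_cases hi1 : (i : ℕ) < n
        · rw [dif_pos (by omega)]
          simp only [Lmat, Dfull, Matrix.of_apply, Fin.val_mk, eq_self_iff_true, if_true,
            eq_false hij, eq_true hsub, eq_false hsup,
            eq_false (by omega : ¬ ((i:ℕ) + 1 = (i:ℕ))),
            eq_false (by omega : ¬ ((i:ℕ) + 1 = (j:ℕ))),
            eq_false (by omega : ¬ ((j:ℕ) + 1 = (i:ℕ) + 1)),
            eq_true (by omega : (j:ℕ) + 1 < n),
            eq_true hi1,
            true_and, and_true, false_and, and_false, if_true, if_false, mul_zero, add_zero]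
          have hdi : (if (i:ℕ) + 1 < n then Real.sqrt ((2 * (n:ℝ) - ((i:ℕ):ℝ)) / 2)
              else if (i:ℕ) + 1 = n then Real.sqrt (((n:ℝ) + 1) / 2) else 0)
              = Real.sqrt ((2 * (n:ℝ) - ((j:ℕ):ℝ) - 1) / 2) := by
            have hji : ((j:ℕ):ℝ) = ((i:ℕ):ℝ) - 1 := by
              have := congrArg (fun m : ℕ => (m:ℝ)) hsub
              push_cast at this; linarith
            rcases lt_trichotomy ((i:ℕ) + 1) n with h2 | h2 | h2
            · rw [if_pos h2, hji]; congr 1; ring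
            · rw [if_neg (by omega), if_pos h2]
              have : ((i:ℕ):ℝ) = (n:ℝ) - 1 := by
                have := congrArg (fun m : ℕ => (m:ℝ)) h2
                push_cast at this; linarith
              rw [hji, this]; congr 1; ring
            · omega
          rw [hdi]
          have hb : (0:ℝ) ≤ 2 * (n:ℝ) - (j:ℕ) - 1 := by
            have : ((j:ℕ):ℝ) + 1 ≤ 2 * n := by exact_mod_cast (by omega : (j:ℕ) + 1 ≤ 2 * n)
            linarith
          rw [mul_neg, mul_comm (Real.sqrt ((2 * (n:ℝ) - ((j:ℕ):ℝ) - 1) / 2)),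
            sqrt_half_mul (((j:ℕ):ℝ) + 1) (2 * (n:ℝ) - (j:ℕ) - 1) (by positivity) hb]
          push_cast
          ring
        · rw [dif_neg (by omega)]
          simp only [Lmat, Dfull, Matrix.of_apply, Fin.val_mk, eq_self_iff_true, if_true,
            eq_false hij, eq_true hsub, eq_false hsup,
            eq_false (by omega : ¬ ((i:ℕ) + 1 < n)),
            eq_false (by omega : ¬ ((i:ℕ) + 1 = n)),
            eq_false hi1,
            true_and, and_false, false_and, if_true, if_false, mul_zero, zero_mul, add_zero]
          ring
      · simp only [Lmat, Dfull, Matrix.of_apply, Fin.val_mk,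
          eq_false hij, eq_false hsub, eq_false hsup,
          false_and, if_false, mul_zero]
        by_cases hd : (i : ℕ) + 1 < n + 1
        · rw [dif_pos hd]
          simp only [Fin.val_mk,
            eq_false (fun h => hsup h : ¬ ((i:ℕ) + 1 = (j:ℕ))),
            eq_false (by omega : ¬ ((j:ℕ) + 1 = (i:ℕ) + 1)), if_false]
          ring
        · rw [dif_neg hd]
          ring
end

section
/- If two symmetric matrices satisfy −LLᵀ = A(n+1) − 2nI with L as given, then A(n+1) has eigenvalue 2n; in particular the singular matrix C = A(n+1) − 2nI has eigenvalue 0 since it equals −LLᵀ with L having a zero in its last diagonal entry. -/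
lemma Lmat_lowerTriangular (n : ℕ) :
    (Lmat n).BlockTriangular OrderDual.toDual := by
  intro i j h
  have hij : (i : ℕ) < (j : ℕ) := h
  simp only [Lmat, Matrix.of_apply]
  rw [if_neg (by omega), if_neg (by omega)]

lemma det_Lmat (n : ℕ) : (Lmat n).det = 0 := by
  rw [Matrix.det_of_lowerTriangular _ (Lmat_lowerTriangular n)]
  apply Finset.prod_eq_zero (Finset.mem_univ (Fin.last n))
  simp only [Lmat, Matrix.of_apply, Fin.val_last, if_pos rfl]
  show (if n + 1 < n then Real.sqrt ((2 * n - (Fin.last n : ℕ)) / 2) else if n + 1 = n then Real.sqrt ((n + 1) / 2) else (0:ℝ)) = 0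
  rw [if_neg (show ¬ (n + 1 < n) by omega), if_neg (show ¬ (n + 1 = n) by omega)]

theorem stmt_7 (n : ℕ) (hn : 1 ≤ n)
    (hfact : Amat (n + 1) - (2 * (n : ℝ)) • (1 : Matrix (Fin (n + 1)) (Fin (n + 1)) ℝ)
      = -(Lmat n * (Lmat n).transpose)) :
    (2 * (n : ℝ)) ∈ spectrum ℝ (Amat (n + 1)) := by
  rw [spectrum.mem_iff]
  have halg : (algebraMap ℝ (Matrix (Fin (n + 1)) (Fin (n + 1)) ℝ)) (2 * (n : ℝ))
      - Amat (n + 1) = Lmat n * (Lmat n).transpose := by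
    rw [Algebra.algebraMap_eq_smul_one]
    have := hfact
    have h2 : Amat (n + 1) = -(Lmat n * (Lmat n).transpose)
        + (2 * (n : ℝ)) • (1 : Matrix (Fin (n + 1)) (Fin (n + 1)) ℝ) := by
      rw [← hfact]; abel
    rw [h2]; abel
  rw [halg, Matrix.isUnit_iff_isUnit_det, Matrix.det_mul, Matrix.det_transpose,
    det_Lmat, mul_zero]
  exact not_isUnit_zero
end

section
/- With masses m_j as in the spring-mass solution (m_{n−i} = 2α²(n+i−1)!(n−i−1)!/((n−1)!)² for i ≥ 1, m_n = α²) and B(n) as defined, the stiffness matrix C = M^{1/2}B(n)M^{1/2} has off-diagonal entries C_{i,i+1} = −k_{i+1} where k_{i+1} = α²·i!(2n−i−1)!/((n−1)!)² for i = 1,…,n−1. -/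
/-- The matrix `B(n) = A(n) + I` with negative off-diagonal signs: diagonal `n`,
off-diagonal `-offA n k` at (1-indexed) position `(k, k+1)`. -/
noncomputable def Bmat (n : ℕ) : Matrix (Fin n) (Fin n) ℝ :=
  Matrix.of fun i j =>
    if (i : ℕ) = (j : ℕ) then (n : ℝ)
    else if (i : ℕ) + 1 = (j : ℕ) then -offA n ((i : ℕ) + 1)
    else if (j : ℕ) + 1 = (i : ℕ) then -offA n ((j : ℕ) + 1)
    else 0

/-- The masses: `m_j = 2α² (2n-j-1)! (j-1)! / ((n-1)!)²` for `1 ≤ j ≤ n-1`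
(i.e. `m_{n-i} = 2α² (n+i-1)! (n-i-1)! / ((n-1)!)²` for `i ≥ 1`) and `m_n = α²`. -/
noncomputable def massVal (n j : ℕ) (α : ℝ) : ℝ :=
  if j = n then α ^ 2
  else 2 * α ^ 2 * (Nat.factorial (2 * n - j - 1)) * (Nat.factorial (j - 1))
    / ((Nat.factorial (n - 1)) : ℝ) ^ 2
theorem stmt_17 (n : ℕ) (hn : 2 ≤ n) (α : ℝ) (hα : 0 < α) :
    ∀ (i : ℕ) (h : i + 1 < n),
      ((Matrix.diagonal fun j : Fin n => Real.sqrt (massVal n ((j : ℕ) + 1) α)) * Bmat n *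
          (Matrix.diagonal fun j : Fin n => Real.sqrt (massVal n ((j : ℕ) + 1) α)))
        ⟨i, by omega⟩ ⟨i + 1, h⟩
      = -(α ^ 2 * (Nat.factorial (i + 1)) * (Nat.factorial (2 * n - i - 2))
          / ((Nat.factorial (n - 1)) : ℝ) ^ 2) := by
  intro i h
  have hF : ((Nat.factorial (n-1) : ℝ)) ≠ 0 := by positivity
  have hT : 0 ≤ α ^ 2 * (Nat.factorial (i + 1)) * (Nat.factorial (2 * n - i - 2))
      / ((Nat.factorial (n - 1)) : ℝ) ^ 2 := by positivity
  have entry : ((Matrix.diagonal fun j : Fin n => Real.sqrt (massVal n ((j : ℕ) + 1) α)) * Bmat n *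
          (Matrix.diagonal fun j : Fin n => Real.sqrt (massVal n ((j : ℕ) + 1) α)))
        ⟨i, by omega⟩ ⟨i + 1, h⟩
      = Real.sqrt (massVal n (i+1) α) * (-offA n (i+1)) * Real.sqrt (massVal n (i+2) α) := by
    rw [Matrix.mul_diagonal, Matrix.diagonal_mul, Bmat]
    simp only [Matrix.of_apply]
    rw [if_neg (show ¬ (i : ℕ) = i + 1 by omega)]
    simp
  rw [entry]
  have h1 : massVal n (i+1) α = 2 * α ^ 2 * (Nat.factorial (2 * n - i - 2)) *
      (Nat.factorial i) / ((Nat.factorial (n - 1)) : ℝ) ^ 2 := by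
    rw [massVal, if_neg (by omega)]
    congr 3 <;> congr 1 <;> omega
  have hm1 : 0 ≤ massVal n (i+1) α := by rw [h1]; positivity
  rcases eq_or_lt_of_le (show i + 2 ≤ n by omega) with hc | hc
  · -- i + 2 = n
    have h2 : massVal n (i+2) α = α ^ 2 := by rw [massVal, if_pos hc]
    have ho : offA n (i+1) = Real.sqrt ((n : ℝ) * ((n : ℝ) - 1) / 2) := by
      rw [offA, if_pos (by omega)]
    have hxn : 0 ≤ (n : ℝ) * ((n : ℝ) - 1) / 2 := by
      have : (2 : ℝ) ≤ n := by exact_mod_cast hn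
      nlinarith
    rw [h2, ho]
    rw [show Real.sqrt (massVal n (i+1) α) * -Real.sqrt ((n : ℝ) * ((n : ℝ) - 1) / 2) *
          Real.sqrt (α ^ 2)
        = -(Real.sqrt (massVal n (i+1) α) * Real.sqrt ((n : ℝ) * ((n : ℝ) - 1) / 2) *
          Real.sqrt (α ^ 2)) from by ring, neg_inj]
    rw [← Real.sqrt_mul hm1, ← Real.sqrt_mul (mul_nonneg hm1 hxn)]
    rw [show massVal n (i+1) α * ((n : ℝ) * ((n : ℝ) - 1) / 2) * α ^ 2
      = (α ^ 2 * (Nat.factorial (i + 1)) * (Nat.factorial (2 * n - i - 2))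
          / ((Nat.factorial (n - 1)) : ℝ) ^ 2) ^ 2 from ?_, Real.sqrt_sq hT]
    rw [h1]
    have e1 : 2 * n - i - 2 = i + 1 + 1 := by omega
    have e3 : n - 1 = i + 1 := by omega
    have hn' : (n : ℝ) = (i : ℝ) + 2 := by
      have : n = i + 2 := by omega
      rw [this]; push_cast; ring
    rw [e1, e3, hn']
    push_cast [Nat.factorial_succ]
    have hfi : ((Nat.factorial i : ℝ)) ≠ 0 := by positivity
    field_simp
    ring
  · -- i + 2 < n
    have h2 : massVal n (i+2) α = 2 * α ^ 2 * (Nat.factorial (2 * n - i - 3)) *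
        (Nat.factorial (i+1)) / ((Nat.factorial (n - 1)) : ℝ) ^ 2 := by
      rw [massVal, if_neg (by omega)]
      congr 3 <;> congr 1 <;> omega
    have hm2 : 0 ≤ massVal n (i+2) α := by rw [h2]; positivity
    have ho : offA n (i+1) = (1/2) * Real.sqrt (((i:ℝ)+1) * (2 * (n:ℝ) - ((i:ℝ)+1) - 1)) := by
      rw [offA, if_neg (by omega)]; push_cast; ring_nf
    have hx : 0 ≤ ((i:ℝ)+1) * (2 * (n:ℝ) - ((i:ℝ)+1) - 1) := by
      have : (i:ℝ) + 2 ≤ n := by exact_mod_cast Nat.cast_le.mpr hc.le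
      nlinarith
    rw [ho]
    rw [show Real.sqrt (massVal n (i+1) α) *
          -(1/2 * Real.sqrt (((i:ℝ)+1) * (2 * (n:ℝ) - ((i:ℝ)+1) - 1)))
        * Real.sqrt (massVal n (i+2) α)
      = -((1/2) * (Real.sqrt (massVal n (i+1) α) *
          Real.sqrt (((i:ℝ)+1) * (2 * (n:ℝ) - ((i:ℝ)+1) - 1))
        * Real.sqrt (massVal n (i+2) α))) from by ring, neg_inj]
    rw [← Real.sqrt_mul hm1, ← Real.sqrt_mul (mul_nonneg hm1 hx)]
    rw [show massVal n (i+1) α * (((i:ℝ)+1) * (2 * (n:ℝ) - ((i:ℝ)+1) - 1)) * massVal n (i+2) α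
      = (2 * (α ^ 2 * (Nat.factorial (i + 1)) * (Nat.factorial (2 * n - i - 2))
          / ((Nat.factorial (n - 1)) : ℝ) ^ 2)) ^ 2 from ?_, Real.sqrt_sq (by positivity)]
    · ring
    rw [h1, h2]
    obtain ⟨k, hk⟩ : ∃ k, n = i + 3 + k := ⟨n - i - 3, by omega⟩
    subst hk
    have e1 : 2 * (i+3+k) - i - 2 = (i + 2*k + 3) + 1 := by omega
    have e2 : 2 * (i+3+k) - i - 3 = i + 2*k + 3 := by omega
    have e3 : i + 3 + k - 1 = i + k + 2 := by omega
    rw [e1, e2, e3]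
    have hfi : ((Nat.factorial (i + 2*k + 3) : ℝ)) ≠ 0 := by positivity
    have hfj : ((Nat.factorial i : ℝ)) ≠ 0 := by positivity
    have hfk : ((Nat.factorial (i + k + 2) : ℝ)) ≠ 0 := by positivity
    push_cast [Nat.factorial_succ]
    field_simp
    ring
end
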